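/- arXiv:2407.06944 — 6 statements merged into one kernel-verified Lean document; each statement's English description precedes it below -/
import Mathlib

section
/- Let p, q ∈ (1,∞) with 1/p + 1/q = 1, and let a, b ≥ 0 be reals. If a^p/p + b^q/q ≤ (1+δ)ab for a sufficiently small δ > 0, then |a^p - b^q| ≤ C δ^{1/2} max(a^p, b^q) for a constant C depending only on p and q. -/
open Real

/-- Bernoulli-type inequality: `u^r ≤ 1 + r(u-1)` for `0 ≤ r ≤ 1`, `0 ≤ u`. -/
lemma bern_aux (r u : ℝ) (hr0 : 0 ≤ r) (hr1 : r ≤ 1) (hu : 0 ≤ u) :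
    u ^ r ≤ 1 + r * (u - 1) := by
  have h := Real.geom_mean_le_arith_mean2_weighted (w₁ := r) (w₂ := 1 - r)
    (p₁ := u) (p₂ := 1) hr0 (by linarith) hu zero_le_one (by ring)
  rw [Real.one_rpow] at h
  nlinarith

/-- Aldaz's stability of the two-point AM-GM inequality. -/
lemma aldaz_aux (θ : ℝ) (hθ0 : 0 < θ) (hθ : θ ≤ 1/2) (s t : ℝ) (hs : 0 ≤ s) (ht : 0 ≤ t) :
    s ^ (2*θ) * t ^ (2-2*θ) + θ * (s - t)^2 ≤ θ * s^2 + (1-θ) * t^2 := by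
  rcases ht.eq_or_lt with h | h
  · subst h
    rw [Real.zero_rpow (ne_of_gt (by linarith : (0:ℝ) < 2 - 2*θ))]
    nlinarith
  · have hb := bern_aux (2*θ) (s/t) (by linarith) (by linarith)
      (div_nonneg hs ht)
    have hkey : s ^ (2*θ) * t ^ (2-2*θ) = (s/t) ^ (2*θ) * t^2 := by
      rw [Real.div_rpow hs ht]
      have h2 : t ^ (2-2*θ) = t ^ (2:ℝ) / t ^ (2*θ) := by
        rw [← Real.rpow_sub h]
      rw [h2, Real.rpow_two]
      field_simp
    have hexp : (1 + 2*θ*(s/t - 1)) * t^2 = t^2 + 2*θ*(s*t) - 2*θ*t^2 := by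
      field_simp
      ring
    have hb2 : (s/t) ^ (2*θ) * t^2 ≤ t^2 + 2*θ*(s*t) - 2*θ*t^2 := by
      rw [← hexp]
      exact mul_le_mul_of_nonneg_right hb (sq_nonneg t)
    rw [hkey]
    nlinarith [hb2]

set_option maxHeartbeats 1600000 in
/-- Stability version of Young's inequality for products: if
`a^p/p + b^q/q ≤ (1+δ)ab` with `δ` sufficiently small, then
`|a^p - b^q| ≤ C δ^{1/2} max(a^p, b^q)`. -/
theorem stmt_6 (p q : ℝ) (hp : 1 < p) (hq : 1 < q) (hpq : 1 / p + 1 / q = 1) :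
    ∃ C > (0:ℝ), ∃ δ₀ > (0:ℝ), ∀ δ : ℝ, 0 < δ → δ ≤ δ₀ →
      ∀ a b : ℝ, 0 ≤ a → 0 ≤ b →
        a ^ p / p + b ^ q / q ≤ (1 + δ) * (a * b) →
        |a ^ p - b ^ q| ≤ C * δ ^ ((1:ℝ)/2) * max (a ^ p) (b ^ q) := by
  have hp0 : (0:ℝ) < p := by linarith
  have hq0 : (0:ℝ) < q := by linarith
  set lam : ℝ := min (1/p) (1/q) with hlam
  have hlam0 : 0 < lam := lt_min (by positivity) (by positivity)
  refine ⟨2 / lam ^ ((1:ℝ)/2), by positivity, 1, one_pos, ?_⟩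
  intro δ hδ hδ1 a b ha hb hyp
  set C : ℝ := 2 / lam ^ ((1:ℝ)/2) with hC
  set s : ℝ := a ^ (p/2) with hsdef
  set t : ℝ := b ^ (q/2) with htdef
  have hs : 0 ≤ s := Real.rpow_nonneg ha _
  have ht : 0 ≤ t := Real.rpow_nonneg hb _
  have hs2 : s ^ 2 = a ^ p := by
    rw [hsdef, ← Real.rpow_natCast (a ^ (p/2)) 2, ← Real.rpow_mul ha]
    norm_num
  have ht2 : t ^ 2 = b ^ q := by
    rw [htdef, ← Real.rpow_natCast (b ^ (q/2)) 2, ← Real.rpow_mul hb]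
    norm_num
  have hsa : s ^ (2/p) = a := by
    rw [hsdef, ← Real.rpow_mul ha, show p/2 * (2/p) = 1 by field_simp, Real.rpow_one]
  have htb : t ^ (2/q) = b := by
    rw [htdef, ← Real.rpow_mul hb, show q/2 * (2/q) = 1 by field_simp, Real.rpow_one]
  have hlr0 : 0 < lam ^ ((1:ℝ)/2) := Real.rpow_pos_of_pos hlam0 _
  have hC0 : 0 < C := div_pos two_pos hlr0
  have hlsq : (lam ^ ((1:ℝ)/2))^2 = lam := by
    rw [← Real.rpow_natCast (lam ^ ((1:ℝ)/2)) 2, ← Real.rpow_mul hlam0.le]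
    norm_num
  have hC2 : C^2 = 4 / lam := by
    rw [hC, div_pow, hlsq]; norm_num
  clear_value s t
  -- key stability inequality
  have key : a * b + lam * (s - t)^2 ≤ (1/p) * s^2 + (1/q) * t^2 := by
    have hcase : 1/p ≤ 1/2 ∨ 1/q ≤ 1/2 := by
      by_contra hcon
      push_neg at hcon
      linarith [hcon.1, hcon.2]
    rcases hcase with hc | hc
    · have h := aldaz_aux (1/p) (by positivity) hc s t hs ht
      have e3 : (1:ℝ) - 1/p = 1/q := by linarith
      have e2 : (2:ℝ) - 2*(1/p) = 2/q := by
        rw [show (2:ℝ)/q = 2 * (1/q) by ring, ← e3]; ring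
      have e1 : 2 * (1/p) = 2/p := by ring
      rw [e2, e1, e3, hsa, htb] at h
      have hmin := mul_le_mul_of_nonneg_right (min_le_left (1/p) (1/q)) (sq_nonneg (s - t))
      rw [← hlam] at hmin
      linarith
    · have h := aldaz_aux (1/q) (by positivity) hc t s ht hs
      have e3 : (1:ℝ) - 1/q = 1/p := by linarith
      have e2 : (2:ℝ) - 2*(1/q) = 2/p := by
        rw [show (2:ℝ)/p = 2 * (1/p) by ring, ← e3]; ring
      have e1 : 2 * (1/q) = 2/q := by ring
      rw [e2, e1, e3, htb, hsa] at h
      have hmin := mul_le_mul_of_nonneg_right (min_le_right (1/p) (1/q)) (sq_nonneg (s - t))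
      rw [← hlam] at hmin
      nlinarith [h, hmin]
  have hyp' : (1/p) * s^2 + (1/q) * t^2 ≤ (1 + δ) * (a * b) := by
    rw [hs2, ht2]
    have e1 : (1/p) * a^p = a^p/p := by ring
    have e2 : (1/q) * b^q = b^q/q := by ring
    rw [e1, e2]; exact hyp
  set m : ℝ := max s t with hm
  have hsm : s ≤ m := le_max_left _ _
  have htm : t ≤ m := le_max_right _ _
  have hm0 : 0 ≤ m := le_trans hs hsm
  clear_value lam C m
  have hmax : max (a ^ p) (b ^ q) = m ^ 2 := by
    rw [← hs2, ← ht2]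
    rcases le_total s t with hle | hle
    · rw [max_eq_right (pow_le_pow_left₀ hs hle 2), hm, max_eq_right hle]
    · rw [max_eq_left (pow_le_pow_left₀ ht hle 2), hm, max_eq_left hle]
  have hab : 0 ≤ a * b := mul_nonneg ha hb
  have hM : (1/p) * s^2 + (1/q) * t^2 ≤ m^2 := by
    have h1 : s^2 ≤ m^2 := pow_le_pow_left₀ hs hsm 2
    have h2 : t^2 ≤ m^2 := pow_le_pow_left₀ ht htm 2
    have hp' : (0:ℝ) ≤ 1/p := by positivity
    have hq' : (0:ℝ) ≤ 1/q := by positivity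
    have i1 := mul_le_mul_of_nonneg_left h1 hp'
    have i2 := mul_le_mul_of_nonneg_left h2 hq'
    have e : (1/p)*m^2 + (1/q)*m^2 = m^2 := by rw [← add_mul, hpq, one_mul]
    linarith
  have hcore : lam * (s - t)^2 ≤ δ * m^2 := by
    have h1 : lam * (s - t)^2 ≤ δ * (a * b) := by linarith [key, hyp']
    have h2 : a * b ≤ m^2 := by
      have := mul_nonneg hlam0.le (sq_nonneg (s - t))
      linarith [key, hM]
    have := mul_le_mul_of_nonneg_left h2 hδ.le
    linarith
  -- conclude
  have hR : 0 ≤ C * δ ^ ((1:ℝ)/2) * m^2 :=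
    mul_nonneg (mul_nonneg hC0.le (Real.rpow_nonneg hδ.le _)) (sq_nonneg m)
  have hδsq : (δ ^ ((1:ℝ)/2))^2 = δ := by
    rw [← Real.rpow_natCast (δ ^ ((1:ℝ)/2)) 2, ← Real.rpow_mul hδ.le]
    norm_num
  have hsq : (s^2 - t^2)^2 ≤ (C * δ ^ ((1:ℝ)/2) * m^2)^2 := by
    have hexp : (C * δ ^ ((1:ℝ)/2) * m^2)^2 = 4 * δ * m^4 / lam := by
      rw [show (C * δ ^ ((1:ℝ)/2) * m^2)^2 = C^2 * (δ ^ ((1:ℝ)/2))^2 * (m^2)^2 by ring,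
        hC2, hδsq]
      ring
    rw [hexp, le_div_iff₀ hlam0]
    have hst4 : (s + t)^2 ≤ 4 * m^2 := by
      calc (s + t)^2 ≤ (2*m)^2 :=
            pow_le_pow_left₀ (add_nonneg hs ht) (by linarith) 2
        _ = 4 * m^2 := by ring
    have hmul : (lam * (s - t)^2) * ((s + t)^2) ≤ (δ * m^2) * (4 * m^2) :=
      mul_le_mul hcore hst4 (sq_nonneg _) (mul_nonneg hδ.le (sq_nonneg m))
    linarith [hmul]
  rw [hmax, ← hs2, ← ht2]
  calc |s^2 - t^2| = Real.sqrt ((s^2 - t^2)^2) := (Real.sqrt_sq_eq_abs _).symm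
    _ ≤ Real.sqrt ((C * δ ^ ((1:ℝ)/2) * m^2)^2) := Real.sqrt_le_sqrt hsq
    _ = C * δ ^ ((1:ℝ)/2) * m^2 := Real.sqrt_sq hR
end

section
/- Let p, q, r ∈ (1,∞) with 1/p + 1/q + 1/r = 1, and let a, b, c ≥ 0. If a^p/p + b^q/q + c^r/r ≤ (1+δ)abc for sufficiently small δ > 0, then a^p = (1 + O(δ^{1/2})) b^q = (1 + O(δ^{1/2})) c^r, where implied constants depend only on p, q, r. -/
open Real

private lemma key_quad (t : ℝ) (ht : 0 < t) :
    (Real.sqrt t - 1) ^ 2 ≤ t - 1 - Real.log t := by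
  have h1 : Real.log (Real.sqrt t) ≤ Real.sqrt t - 1 :=
    Real.log_le_sub_one_of_pos (Real.sqrt_pos.mpr ht)
  have h2 : Real.log (Real.sqrt t) = Real.log t / 2 := Real.log_sqrt ht.le
  have h3 : Real.sqrt t ^ 2 = t := Real.sq_sqrt ht.le
  nlinarith

private lemma bound_aux (x s : ℝ) (hs0 : 0 ≤ s) (hs4 : s ≤ 1/4) (hx : 0 < x)
    (hfx : x - 1 - Real.log x ≤ s ^ 2) : |x - 1| ≤ 9/4 * s := by
  have hk := key_quad x hx
  have h1 : (Real.sqrt x - 1) ^ 2 ≤ s ^ 2 := by linarith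
  have h2 : |Real.sqrt x - 1| ≤ s := by
    rw [← Real.sqrt_sq hs0, ← Real.sqrt_sq_eq_abs]
    exact Real.sqrt_le_sqrt h1
  rw [abs_le] at h2 ⊢
  have hxx : Real.sqrt x ^ 2 = x := Real.sq_sqrt hx.le
  constructor <;> nlinarith [h2.1, h2.2, hs4, hs0]

/-- Three-variable stability version of the weighted AM–GM inequality: if
`a^p/p + b^q/q + c^r/r ≤ (1+δ)abc` with `δ` sufficiently small, then
`a^p = (1+O(δ^{1/2})) b^q = (1+O(δ^{1/2})) c^r`. -/
theorem stmt_7 (p q r : ℝ) (hp : 1 < p) (hq : 1 < q) (hr : 1 < r)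
    (hpqr : 1 / p + 1 / q + 1 / r = 1) :
    ∃ C > (0:ℝ), ∃ δ₀ > (0:ℝ), ∀ δ : ℝ, 0 < δ → δ ≤ δ₀ →
      ∀ a b c : ℝ, 0 ≤ a → 0 ≤ b → 0 ≤ c →
        a ^ p / p + b ^ q / q + c ^ r / r ≤ (1 + δ) * (a * b * c) →
        ∃ θ₁ θ₂ : ℝ, |θ₁| ≤ C * δ ^ ((1:ℝ)/2) ∧ |θ₂| ≤ C * δ ^ ((1:ℝ)/2) ∧
          a ^ p = (1 + θ₁) * b ^ q ∧ a ^ p = (1 + θ₂) * c ^ r := by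
  have hp0 : (0:ℝ) < p := by linarith
  have hq0 : (0:ℝ) < q := by linarith
  have hr0 : (0:ℝ) < r := by linarith
  set M : ℝ := max p (max q r) with hMdef
  have hMp : p ≤ M := le_max_left _ _
  have hMq : q ≤ M := le_trans (le_max_left q r) (le_max_right _ _)
  have hMr : r ≤ M := le_trans (le_max_right q r) (le_max_right _ _)
  have hM1 : (1:ℝ) < M := lt_of_lt_of_le hp hMp
  have hM0 : (0:ℝ) < M := by linarith
  refine ⟨16 * Real.sqrt M, by positivity, 1 / (16 * M), by positivity, ?_⟩
  intro δ hδ hδ0 a b c ha hb hc hineq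
  have hCδ0 : 0 ≤ 16 * Real.sqrt M * δ ^ ((1:ℝ)/2) := by positivity
  by_cases habc : a * b * c = 0
  · -- degenerate case : all powers are zero
    have h0 : a ^ p / p + b ^ q / q + c ^ r / r ≤ 0 := by
      rw [habc] at hineq; linarith
    have hap : 0 ≤ a ^ p / p := by positivity
    have hbq : 0 ≤ b ^ q / q := by positivity
    have hcr : 0 ≤ c ^ r / r := by positivity
    have hap0 : a ^ p = 0 := by
      have h : a ^ p / p = 0 := by linarith
      exact (div_eq_zero_iff.mp h).resolve_right hp0.ne'
    have hbq0 : b ^ q = 0 := by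
      have h : b ^ q / q = 0 := by linarith
      exact (div_eq_zero_iff.mp h).resolve_right hq0.ne'
    have hcr0 : c ^ r = 0 := by
      have h : c ^ r / r = 0 := by linarith
      exact (div_eq_zero_iff.mp h).resolve_right hr0.ne'
    exact ⟨0, 0, by simpa using hCδ0, by simpa using hCδ0,
      by rw [hap0, hbq0]; ring, by rw [hap0, hcr0]; ring⟩
  · have ha0 : 0 < a := lt_of_le_of_ne ha (by rintro rfl; exact habc (by ring))
    have hb0 : 0 < b := lt_of_le_of_ne hb (by rintro rfl; exact habc (by ring))
    have hc0 : 0 < c := lt_of_le_of_ne hc (by rintro rfl; exact habc (by ring))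
    set G : ℝ := a * b * c with hGdef
    have hG0 : 0 < G := by positivity
    set A : ℝ := a ^ p / G with hAdef
    set B : ℝ := b ^ q / G with hBdef
    set D : ℝ := c ^ r / G with hDdef
    have hA0 : 0 < A := by rw [hAdef]; exact div_pos (Real.rpow_pos_of_pos ha0 p) hG0
    have hB0 : 0 < B := by rw [hBdef]; exact div_pos (Real.rpow_pos_of_pos hb0 q) hG0
    have hD0 : 0 < D := by rw [hDdef]; exact div_pos (Real.rpow_pos_of_pos hc0 r) hG0
    clear_value M G A B D
    -- multiplicative constraint in log form
    have hpqr' : q * r + p * r + p * q = p * q * r := by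
      field_simp at hpqr; linarith
    have hlogG : Real.log G = Real.log a + Real.log b + Real.log c := by
      rw [hGdef, Real.log_mul (by positivity) hc0.ne', Real.log_mul ha0.ne' hb0.ne']
    have hlA : Real.log A = p * Real.log a - Real.log G := by
      rw [hAdef, Real.log_div (Real.rpow_pos_of_pos ha0 p).ne' hG0.ne', Real.log_rpow ha0]
    have hlB : Real.log B = q * Real.log b - Real.log G := by
      rw [hBdef, Real.log_div (Real.rpow_pos_of_pos hb0 q).ne' hG0.ne', Real.log_rpow hb0]
    have hlD : Real.log D = r * Real.log c - Real.log G := by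
      rw [hDdef, Real.log_div (Real.rpow_pos_of_pos hc0 r).ne' hG0.ne', Real.log_rpow hc0]
    have hlog : Real.log A / p + Real.log B / q + Real.log D / r = 0 := by
      have h1 : ∀ x w lg : ℝ, w ≠ 0 → (w * x - lg) / w = x - lg * (1 / w) := by
        intro x w lg hw; field_simp
      rw [hlA, hlB, hlD, h1 _ _ _ hp0.ne', h1 _ _ _ hq0.ne', h1 _ _ _ hr0.ne', hlogG]
      linear_combination (-(Real.log a + Real.log b + Real.log c)) * hpqr
    -- sum constraint
    have hsum : A / p + B / q + D / r ≤ 1 + δ := by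
      have h1 : (a ^ p / p + b ^ q / q + c ^ r / r) / G ≤ 1 + δ := by
        rw [div_le_iff₀ hG0]; linarith
      calc A / p + B / q + D / r = (a ^ p / p + b ^ q / q + c ^ r / r) / G := by
            rw [hAdef, hBdef, hDdef]; ring
        _ ≤ 1 + δ := h1
    -- the entropy-type deficits
    have hfA : 0 ≤ A - 1 - Real.log A := by
      have := Real.log_le_sub_one_of_pos hA0; linarith
    have hfB : 0 ≤ B - 1 - Real.log B := by
      have := Real.log_le_sub_one_of_pos hB0; linarith
    have hfD : 0 ≤ D - 1 - Real.log D := by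
      have := Real.log_le_sub_one_of_pos hD0; linarith
    have hftot : (A - 1 - Real.log A) / p + (B - 1 - Real.log B) / q
        + (D - 1 - Real.log D) / r ≤ δ := by
      have expand : (A - 1 - Real.log A) / p + (B - 1 - Real.log B) / q
          + (D - 1 - Real.log D) / r
          = (A / p + B / q + D / r) - (1/p + 1/q + 1/r)
            - (Real.log A / p + Real.log B / q + Real.log D / r) := by ring
      rw [expand, hpqr, hlog]; linarith
    have hfA' : A - 1 - Real.log A ≤ δ * M := by
      have h1 : (A - 1 - Real.log A) / p ≤ δ := by
        have h2 : 0 ≤ (B - 1 - Real.log B) / q := by positivity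
        have h3 : 0 ≤ (D - 1 - Real.log D) / r := by positivity
        linarith
      calc A - 1 - Real.log A ≤ δ * p := by
            rw [div_le_iff₀ hp0] at h1; linarith
        _ ≤ δ * M := mul_le_mul_of_nonneg_left hMp hδ.le
    have hfB' : B - 1 - Real.log B ≤ δ * M := by
      have h1 : (B - 1 - Real.log B) / q ≤ δ := by
        have h2 : 0 ≤ (A - 1 - Real.log A) / p := by positivity
        have h3 : 0 ≤ (D - 1 - Real.log D) / r := by positivity
        linarith
      calc B - 1 - Real.log B ≤ δ * q := by
            rw [div_le_iff₀ hq0] at h1; linarith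
        _ ≤ δ * M := mul_le_mul_of_nonneg_left hMq hδ.le
    have hfD' : D - 1 - Real.log D ≤ δ * M := by
      have h1 : (D - 1 - Real.log D) / r ≤ δ := by
        have h2 : 0 ≤ (A - 1 - Real.log A) / p := by positivity
        have h3 : 0 ≤ (B - 1 - Real.log B) / q := by positivity
        linarith
      calc D - 1 - Real.log D ≤ δ * r := by
            rw [div_le_iff₀ hr0] at h1; linarith
        _ ≤ δ * M := mul_le_mul_of_nonneg_left hMr hδ.le
    -- quadratic control
    set s : ℝ := Real.sqrt (δ * M) with hsdef
    have hs0 : 0 ≤ s := Real.sqrt_nonneg _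
    have hs4 : s ≤ 1 / 4 := by
      rw [hsdef]
      have : δ * M ≤ 1 / 16 := by
        rw [le_div_iff₀ (by positivity : (0:ℝ) < 16 * M)] at hδ0
        ring_nf at hδ0 ⊢
        linarith
      calc Real.sqrt (δ * M) ≤ Real.sqrt (1/16) := Real.sqrt_le_sqrt this
        _ = 1/4 := by
            rw [show (1:ℝ)/16 = (1/4)^2 by norm_num, Real.sqrt_sq (by norm_num)]
    have hs2 : s ^ 2 = δ * M := Real.sq_sqrt (by positivity)
    clear_value s
    have bound : ∀ x : ℝ, 0 < x → x - 1 - Real.log x ≤ δ * M → |x - 1| ≤ 9/4 * s :=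
      fun x hx hfx => bound_aux x s hs0 hs4 hx (by rw [hs2]; exact hfx)
    have hAb := bound A hA0 hfA'
    have hBb := bound B hB0 hfB'
    have hDb := bound D hD0 hfD'
    rw [abs_le] at hAb hBb hDb
    clear hineq hCδ0 hpqr hpqr' hlA hlB hlD hlogG hlog hsum hfA hfB hfD hftot hfA' hfB' hfD' bound
    have hBlow : 7/16 ≤ B := by linarith [hBb.1, hs4]
    have hDlow : 7/16 ≤ D := by linarith [hDb.1, hs4]
    -- the ratios
    refine ⟨A / B - 1, A / D - 1, ?_, ?_, ?_, ?_⟩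
    · have h16 : |A / B - 1| ≤ 16 * s := by
        rw [abs_le]
        constructor
        · rw [le_sub_iff_add_le, le_div_iff₀ hB0]
          linarith [hAb.1, hBb.2, hs4, mul_le_mul_of_nonneg_left hBlow hs0]
        · rw [sub_le_iff_le_add, div_le_iff₀ hB0]
          linarith [hAb.2, hBb.1, hs4, mul_le_mul_of_nonneg_left hBlow hs0]
      calc |A / B - 1| ≤ 16 * s := h16
        _ = 16 * Real.sqrt M * δ ^ ((1:ℝ)/2) := by
            rw [hsdef, Real.sqrt_mul hδ.le, ← Real.sqrt_eq_rpow]; ring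
    · have h16 : |A / D - 1| ≤ 16 * s := by
        rw [abs_le]
        constructor
        · rw [le_sub_iff_add_le, le_div_iff₀ hD0]
          linarith [hAb.1, hDb.2, hs4, mul_le_mul_of_nonneg_left hDlow hs0]
        · rw [sub_le_iff_le_add, div_le_iff₀ hD0]
          linarith [hAb.2, hDb.1, hs4, mul_le_mul_of_nonneg_left hDlow hs0]
      calc |A / D - 1| ≤ 16 * s := h16
        _ = 16 * Real.sqrt M * δ ^ ((1:ℝ)/2) := by
            rw [hsdef, Real.sqrt_mul hδ.le, ← Real.sqrt_eq_rpow]; ring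
    · have hbq : (0:ℝ) < b ^ q := Real.rpow_pos_of_pos hb0 q
      have key : a ^ p / G / (b ^ q / G) * (b ^ q) = a ^ p := by
        field_simp
      calc a ^ p = a ^ p / G / (b ^ q / G) * (b ^ q) := key.symm
        _ = (1 + (A / B - 1)) * b ^ q := by rw [hAdef, hBdef]; ring
    · have hcr : (0:ℝ) < c ^ r := Real.rpow_pos_of_pos hc0 r
      have key : a ^ p / G / (c ^ r / G) * (c ^ r) = a ^ p := by
        field_simp
      calc a ^ p = a ^ p / G / (c ^ r / G) * (c ^ r) := key.symm
        _ = (1 + (A / D - 1)) * c ^ r := by rw [hAdef, hDdef]; ring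
end

section
/- Let p,q,r ∈ (1,∞) with 1/p+1/q+1/r = 1. Let a₁,...,aₙ, b₁,...,bₙ, c₁,...,cₙ be non-negative reals with Σ aᵢ^p = Σ bᵢ^q = Σ cᵢ^r = 1. If Σ aᵢbᵢcᵢ ≥ 1-δ for sufficiently small δ > 0, then there is an exceptional set E ⊂ {1,...,n} with Σ_{i∈E}(aᵢ^p + bᵢ^q + cᵢ^r) ≤ C δ^{1/2}, and for each i ∉ E one has aᵢ^p = (1+O(δ^{1/4})) bᵢ^q = (1+O(δ^{1/4})) cᵢ^r. -/
open Real Finset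


lemma two_var (w₁ w₂ a b : ℝ) (hw₁ : 0 ≤ w₁) (hw₂ : 0 ≤ w₂) (hw : w₁ + w₂ = 1)
    (ha : 0 ≤ a) (hb : 0 ≤ b) :
    a ^ w₁ * b ^ w₂ ≤ (w₁ * √a + w₂ * √b) ^ 2 := by
  have h := Real.geom_mean_le_arith_mean2_weighted hw₁ hw₂ (Real.sqrt_nonneg a)
    (Real.sqrt_nonneg b) hw
  have key : ∀ t : ℝ, 0 ≤ t → ∀ w : ℝ, (√t ^ w) ^ 2 = t ^ w := by
    intro t ht w
    rw [← Real.rpow_natCast (√t ^ w) 2, ← Real.rpow_mul (Real.sqrt_nonneg t)]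
    push_cast
    rw [mul_comm, Real.rpow_mul (Real.sqrt_nonneg t), Real.rpow_two, Real.sq_sqrt ht]
  calc a ^ w₁ * b ^ w₂ = (√a ^ w₁ * √b ^ w₂) ^ 2 := by
        rw [mul_pow, key a ha, key b hb]
    _ ≤ (w₁ * √a + w₂ * √b) ^ 2 := by
        apply pow_le_pow_left₀ (mul_nonneg (Real.rpow_nonneg (Real.sqrt_nonneg a) _)
          (Real.rpow_nonneg (Real.sqrt_nonneg b) _)) h

lemma two_var' (w₁ w₂ a b : ℝ) (hw₁ : 0 ≤ w₁) (hw₂ : 0 ≤ w₂) (hw : w₁ + w₂ = 1)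
    (ha : 0 ≤ a) (hb : 0 ≤ b) :
    a ^ w₁ * b ^ w₂ ≤ w₁ * a + w₂ * b - w₁ * w₂ * (√a - √b) ^ 2 := by
  have h := two_var w₁ w₂ a b hw₁ hw₂ hw ha hb
  have ha' := Real.sq_sqrt ha
  have hb' := Real.sq_sqrt hb
  have e : (w₁ * √a + w₂ * √b) ^ 2 = w₁ * a + w₂ * b - w₁ * w₂ * (√a - √b) ^ 2 := by
    linear_combination (w₁ * √a ^ 2 + w₂ * √b ^ 2) * hw + w₁ * ha' + w₂ * hb'
  linarith [h, e]

set_option maxHeartbeats 1000000 in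
lemma three_var (α β γ : ℝ) (hα : 0 < α) (hβ : 0 < β) (hγ : 0 < γ)
    (hαβγ : α + β + γ = 1) (x y z : ℝ) (hx : 0 ≤ x) (hy : 0 ≤ y) (hz : 0 ≤ z) :
    x ^ α * y ^ β * z ^ γ
      + (min ((1 - α) * (β / (β + γ)) * (γ / (β + γ))) (α * (1 - α)) / 5)
        * ((√x - √y) ^ 2 + (√y - √z) ^ 2 + (√x - √z) ^ 2)
      ≤ α * x + β * y + γ * z := by
  have hβγ : 0 < β + γ := by linarith
  have hα1 : α < 1 := by linarith
  obtain ⟨β', hb'def⟩ : ∃ t : ℝ, β / (β + γ) = t := ⟨_, rfl⟩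
  obtain ⟨γ', hg'def⟩ : ∃ t : ℝ, γ / (β + γ) = t := ⟨_, rfl⟩
  rw [hb'def, hg'def]
  have hβ'0 : 0 < β' := hb'def ▸ div_pos hβ hβγ
  have hγ'0 : 0 < γ' := hg'def ▸ div_pos hγ hβγ
  have hsum : β' + γ' = 1 := by rw [← hb'def, ← hg'def]; field_simp
  have hγ'1 : γ' ≤ 1 := by linarith
  have hβ'1 : β' ≤ 1 := by linarith
  have hbb : β = (1 - α) * β' := by
    rw [← hb'def, show (1:ℝ) - α = β + γ by linarith]; field_simp
  have hgg : γ = (1 - α) * γ' := by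
    rw [← hg'def, show (1:ℝ) - α = β + γ by linarith]; field_simp
  obtain ⟨s, hsdef⟩ : ∃ t : ℝ, β' * √y + γ' * √z = t := ⟨_, rfl⟩
  have hs0 : 0 ≤ s := by
    rw [← hsdef]; positivity
  have h1 : y ^ β' * z ^ γ' ≤ s ^ 2 := by
    rw [← hsdef]; exact two_var β' γ' y z hβ'0.le hγ'0.le hsum hy hz
  have h2 : y ^ β * z ^ γ ≤ (s ^ 2) ^ (1 - α) := by
    calc y ^ β * z ^ γ = (y ^ β' * z ^ γ') ^ (β + γ) := by
          rw [Real.mul_rpow (Real.rpow_nonneg hy _) (Real.rpow_nonneg hz _),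
            ← Real.rpow_mul hy, ← Real.rpow_mul hz, hbb, hgg,
            show (1 - α) = β + γ by linarith]
          congr 2
          · linear_combination (-(β * β' + γ * β')) * hsum
          · linear_combination (-(β * γ' + γ * γ')) * hsum
      _ ≤ (s ^ 2) ^ (β + γ) :=
          Real.rpow_le_rpow (mul_nonneg (Real.rpow_nonneg hy _) (Real.rpow_nonneg hz _))
            h1 hβγ.le
      _ = (s ^ 2) ^ (1 - α) := by rw [show β + γ = 1 - α by linarith]
  have h3 : x ^ α * (s ^ 2) ^ (1 - α)
      ≤ α * x + (1 - α) * s ^ 2 - α * (1 - α) * (√x - √(s ^ 2)) ^ 2 :=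
    two_var' α (1 - α) x (s ^ 2) hα.le (by linarith) (by ring) hx (by positivity)
  rw [Real.sqrt_sq hs0] at h3
  have hmain : x ^ α * y ^ β * z ^ γ
      ≤ α * x + (1 - α) * s ^ 2 - α * (1 - α) * (√x - s) ^ 2 := by
    calc x ^ α * y ^ β * z ^ γ = x ^ α * (y ^ β * z ^ γ) := by ring
      _ ≤ x ^ α * (s ^ 2) ^ (1 - α) :=
          mul_le_mul_of_nonneg_left h2 (Real.rpow_nonneg hx _)
      _ ≤ _ := h3
  have hy' := Real.sq_sqrt hy
  have hz' := Real.sq_sqrt hz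
  have hident : (1 - α) * s ^ 2 + (1 - α) * β' * γ' * (√y - √z) ^ 2 = β * y + γ * z := by
    rw [hbb, hgg, ← hsdef]
    linear_combination ((1 - α) * (β' * √y ^ 2 + γ' * √z ^ 2)) * hsum
      + (1 - α) * β' * hy' + (1 - α) * γ' * hz'
  have e1 : √x - √y = (√x - s) + γ' * (√z - √y) := by
    rw [← hsdef]; linear_combination √y * hsum
  have e2 : √x - √z = (√x - s) + β' * (√y - √z) := by
    rw [← hsdef]; linear_combination √z * hsum
  have hγsq : γ' ^ 2 ≤ 1 := by nlinarith
  have hβsq : β' ^ 2 ≤ 1 := by nlinarith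
  have h4 : (√x - √y) ^ 2 ≤ 2 * (√x - s) ^ 2 + 2 * (√y - √z) ^ 2 := by
    rw [e1]
    linarith [sq_nonneg ((√x - s) - γ' * (√z - √y)),
      mul_nonneg (sub_nonneg.2 hγsq) (sq_nonneg (√z - √y))]
  have h5 : (√x - √z) ^ 2 ≤ 2 * (√x - s) ^ 2 + 2 * (√y - √z) ^ 2 := by
    rw [e2]
    linarith [sq_nonneg ((√x - s) - β' * (√y - √z)),
      mul_nonneg (sub_nonneg.2 hβsq) (sq_nonneg (√y - √z))]
  obtain ⟨c, hcdef⟩ : ∃ t : ℝ, min ((1 - α) * β' * γ') (α * (1 - α)) / 5 = t := ⟨_, rfl⟩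
  rw [hcdef]
  have hc1 : c ≤ (1 - α) * β' * γ' / 5 := by
    rw [← hcdef]
    have := min_le_left ((1 - α) * β' * γ') (α * (1 - α))
    linarith
  have hc2 : c ≤ α * (1 - α) / 5 := by
    rw [← hcdef]
    have := min_le_right ((1 - α) * β' * γ') (α * (1 - α))
    linarith
  have hc0 : 0 ≤ c := by
    rw [← hcdef]
    have h1' : 0 ≤ (1 - α) * β' * γ' :=
      mul_nonneg (mul_nonneg (by linarith) hβ'0.le) hγ'0.le
    have h2' : 0 ≤ α * (1 - α) := mul_nonneg hα.le (by linarith)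
    have h3' : (0:ℝ) ≤ min ((1 - α) * β' * γ') (α * (1 - α)) := le_min h1' h2'
    linarith
  have hA0 : (0:ℝ) ≤ (√x - s) ^ 2 := sq_nonneg _
  have hB0 : (0:ℝ) ≤ (√y - √z) ^ 2 := sq_nonneg _
  have t1 : c * ((√x - √y) ^ 2 + (√y - √z) ^ 2 + (√x - √z) ^ 2)
      ≤ c * (4 * (√x - s) ^ 2 + 5 * (√y - √z) ^ 2) :=
    mul_le_mul_of_nonneg_left (by linarith) hc0
  have h6 : 0 ≤ (α * (1 - α) - 4 * c) * (√x - s) ^ 2 := by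
    apply mul_nonneg _ hA0
    have : 0 ≤ α * (1 - α) := mul_nonneg hα.le (by linarith)
    linarith
  have h7 : 0 ≤ ((1 - α) * β' * γ' - 5 * c) * (√y - √z) ^ 2 := by
    apply mul_nonneg _ hB0
    have : 0 ≤ (1 - α) * β' * γ' :=
      mul_nonneg (mul_nonneg (by linarith) hβ'0.le) hγ'0.le
    linarith
  linarith [hmain, hident, t1, h6, h7]


lemma sqrt_close (x y T : ℝ) (hT : 0 ≤ T) (h : (√x - √y) ^ 2 ≤ T) : |√x - √y| ≤ √T := by
  have h1 := Real.sqrt_le_sqrt h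
  rwa [Real.sqrt_sq_eq_abs] at h1

lemma quarter (x y z s T : ℝ) (hx : 0 ≤ x) (hy : 0 ≤ y) (hz : 0 ≤ z)
    (hs : s = x + y + z) (hT : 0 ≤ T) (hT' : T ≤ s / 400)
    (h1 : (√x - √y) ^ 2 ≤ T) (h2 : (√z - √y) ^ 2 ≤ T) : s / 4 ≤ y := by
  have hs0 : 0 ≤ s := by rw [hs]; positivity
  have t0 : 0 ≤ √T := Real.sqrt_nonneg T
  have hxy := abs_le.1 (sqrt_close x y T hT h1)
  have hzy := abs_le.1 (sqrt_close z y T hT h2)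
  -- x, z ≤ (√y + √T)^2
  have hx' : x ≤ (√y + √T) ^ 2 := by
    nlinarith [Real.sq_sqrt hx, Real.sqrt_nonneg x, Real.sqrt_nonneg y, hxy.2]
  have hz' : z ≤ (√y + √T) ^ 2 := by
    nlinarith [Real.sq_sqrt hz, Real.sqrt_nonneg z, Real.sqrt_nonneg y, hzy.2]
  have hy' : y ≤ (√y + √T) ^ 2 := by
    nlinarith [Real.sq_sqrt hy, Real.sqrt_nonneg y]
  have hs3 : s / 3 ≤ (√y + √T) ^ 2 := by rw [hs]; linarith
  have h5 : √(s / 3) ≤ √y + √T := by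
    have := Real.sqrt_le_sqrt hs3
    rwa [Real.sqrt_sq (by positivity)] at this
  have h6 : (11 / 20 : ℝ) * √s ≤ √(s / 3) := by
    rw [show s / 3 = s * (1/3) by ring, Real.sqrt_mul hs0]
    have h13 : (11/20 : ℝ) ≤ √(1/3) := by
      rw [show (11/20 : ℝ) = √((11/20)^2) by rw [Real.sqrt_sq (by norm_num)]]
      apply Real.sqrt_le_sqrt; norm_num
    nlinarith [Real.sqrt_nonneg s, Real.sqrt_nonneg (1/3 : ℝ)]
  have h7 : √T ≤ (1 / 20 : ℝ) * √s := by
    have := Real.sqrt_le_sqrt hT'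
    rw [show s / 400 = s * (1/400) by ring, Real.sqrt_mul hs0] at this
    have h400 : √(1/400 : ℝ) = 1/20 := by
      rw [show (1/400 : ℝ) = (1/20)^2 by norm_num, Real.sqrt_sq (by norm_num)]
    rw [h400] at this
    linarith
  have h8 : √s / 2 ≤ √y := by linarith
  nlinarith [Real.sq_sqrt hy, Real.sq_sqrt hs0, Real.sqrt_nonneg s, Real.sqrt_nonneg y]

lemma ratio (x y s T : ℝ) (hx : 0 ≤ x) (hy : 0 ≤ y) (hs0 : 0 < s)
    (hxs : x ≤ s) (hys : y ≤ s) (hy4 : s / 4 ≤ y) (hT : 0 ≤ T)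
    (h1 : (√x - √y) ^ 2 ≤ T) : |x / y - 1| ≤ 8 * √T / √s := by
  have hy0 : 0 < y := by linarith
  have hxy := sqrt_close x y T hT h1
  have hsx : √x ≤ √s := Real.sqrt_le_sqrt hxs
  have hsy : √y ≤ √s := Real.sqrt_le_sqrt hys
  have hmulx := Real.mul_self_sqrt hx
  have hmuly := Real.mul_self_sqrt hy
  have e : x - y = (√x - √y) * (√x + √y) := by nlinarith [hmulx, hmuly]
  have habs : |x - y| ≤ √T * (2 * √s) := by
    rw [e, abs_mul, abs_of_nonneg (by positivity : (0:ℝ) ≤ √x + √y)]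
    have : √x + √y ≤ 2 * √s := by linarith
    have h2' : |√x - √y| * (√x + √y) ≤ √T * (2 * √s) := by
      apply mul_le_mul hxy this (by positivity) (Real.sqrt_nonneg T)
    exact h2'
  have e2 : x / y - 1 = (x - y) / y := by field_simp
  rw [e2, abs_div, abs_of_pos hy0]
  rw [div_le_div_iff₀ hy0 (by positivity : (0:ℝ) < √s)]
  -- |x - y| * √s ≤ 8 √T / ... goal : |x-y| * √s ≤ 8 * √T * y? no:  |x-y| * √s ≤ (8 * √T) * y
  have hss : √s * √s = s := Real.mul_self_sqrt hs0.le
  nlinarith [habs, hy4, Real.sqrt_nonneg T, Real.sqrt_nonneg s, hss,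
    mul_le_mul_of_nonneg_right habs (Real.sqrt_nonneg s)]

set_option maxHeartbeats 1600000 in
/-- Stability version of the triple Hölder inequality. -/
theorem stmt_8 (p q r : ℝ) (hp : 1 < p) (hq : 1 < q) (hr : 1 < r)
    (hpqr : 1 / p + 1 / q + 1 / r = 1) :
    ∃ C > (0:ℝ), ∃ δ₀ > (0:ℝ), ∀ δ : ℝ, 0 < δ → δ ≤ δ₀ →
      ∀ (n : ℕ) (a b c : Fin n → ℝ),
        (∀ i, 0 ≤ a i) → (∀ i, 0 ≤ b i) → (∀ i, 0 ≤ c i) →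
        (∑ i, a i ^ p) = 1 → (∑ i, b i ^ q) = 1 → (∑ i, c i ^ r) = 1 →
        (1 - δ ≤ ∑ i, a i * b i * c i) →
        ∃ E : Finset (Fin n),
          (∑ i ∈ E, (a i ^ p + b i ^ q + c i ^ r)) ≤ C * δ ^ ((1:ℝ)/2) ∧
          ∀ i ∉ E, ∃ θ₁ θ₂ : ℝ, |θ₁| ≤ C * δ ^ ((1:ℝ)/4) ∧ |θ₂| ≤ C * δ ^ ((1:ℝ)/4) ∧
            a i ^ p = (1 + θ₁) * b i ^ q ∧ a i ^ p = (1 + θ₂) * c i ^ r := by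
  classical
  have hp0 : (0:ℝ) < p := by linarith
  have hq0 : (0:ℝ) < q := by linarith
  have hr0 : (0:ℝ) < r := by linarith
  have hα : (0:ℝ) < 1/p := by positivity
  have hβ : (0:ℝ) < 1/q := by positivity
  have hγ : (0:ℝ) < 1/r := by positivity
  have hα1 : 1/p < 1 := by linarith
  -- package the three-variable quantitative AM-GM
  obtain ⟨c₀, hc₀, hkey⟩ : ∃ c₀ > (0:ℝ), ∀ x y z : ℝ, 0 ≤ x → 0 ≤ y → 0 ≤ z →
      x ^ (1/p) * y ^ (1/q) * z ^ (1/r)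
        + c₀ * ((√x - √y) ^ 2 + (√y - √z) ^ 2 + (√x - √z) ^ 2)
      ≤ (1/p) * x + (1/q) * y + (1/r) * z := by
    refine ⟨min ((1 - 1/p) * ((1/q) / (1/q + 1/r)) * ((1/r) / (1/q + 1/r)))
      ((1/p) * (1 - 1/p)) / 5, ?_, ?_⟩
    · have h1 : (0:ℝ) < (1 - 1/p) * ((1/q) / (1/q + 1/r)) * ((1/r) / (1/q + 1/r)) := by
        have : (0:ℝ) < 1/q + 1/r := by positivity
        have h2 : (0:ℝ) < 1 - 1/p := by linarith
        positivity
      have h2 : (0:ℝ) < (1/p) * (1 - 1/p) := by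
        have : (0:ℝ) < 1 - 1/p := by linarith
        positivity
      have := lt_min h1 h2
      linarith
    · intro x y z hx hy hz
      exact three_var (1/p) (1/q) (1/r) hα hβ hγ hpqr x y z hx hy hz
  have hsc₀ : (0:ℝ) < √c₀ := Real.sqrt_pos.2 hc₀
  refine ⟨8 / √c₀ + 1, by positivity, (c₀ / 400) ^ 2, by positivity, ?_⟩
  intro δ hδ0 hδδ0 n a b c ha hb hc hsa hsb hsc hlow
  set K : ℝ := 8 / √c₀ + 1 with hKdef
  have hK1 : (1:ℝ) ≤ K := by
    rw [hKdef]
    have : 0 ≤ 8 / √c₀ := by positivity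
    linarith
  -- notation
  have hx0 : ∀ i, 0 ≤ a i ^ p := fun i => Real.rpow_nonneg (ha i) p
  have hy0 : ∀ i, 0 ≤ b i ^ q := fun i => Real.rpow_nonneg (hb i) q
  have hz0 : ∀ i, 0 ≤ c i ^ r := fun i => Real.rpow_nonneg (hc i) r
  have hpow : ∀ (t e : ℝ), 0 ≤ t → 0 < e → (t ^ e) ^ (1/e) = t := by
    intro t e ht he
    rw [← Real.rpow_mul ht, mul_one_div_cancel he.ne', Real.rpow_one]
  have habc : ∀ i, a i * b i * c i
      = (a i ^ p) ^ (1/p) * (b i ^ q) ^ (1/q) * (c i ^ r) ^ (1/r) := by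
    intro i
    rw [hpow _ _ (ha i) hp0, hpow _ _ (hb i) hq0, hpow _ _ (hc i) hr0]
  -- deficits
  have hd0 : ∀ i, 0 ≤ (1/p) * (a i ^ p) + (1/q) * (b i ^ q) + (1/r) * (c i ^ r)
      - a i * b i * c i := by
    intro i
    have h := hkey (a i ^ p) (b i ^ q) (c i ^ r) (hx0 i) (hy0 i) (hz0 i)
    rw [← habc i] at h
    have hQ0 : (0:ℝ) ≤ (√(a i ^ p) - √(b i ^ q)) ^ 2 + (√(b i ^ q) - √(c i ^ r)) ^ 2
        + (√(a i ^ p) - √(c i ^ r)) ^ 2 := by positivity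
    linarith [h, mul_nonneg hc₀.le hQ0]
  have hdsum : ∑ i, ((1/p) * (a i ^ p) + (1/q) * (b i ^ q) + (1/r) * (c i ^ r)
      - a i * b i * c i) ≤ δ := by
    rw [Finset.sum_sub_distrib, Finset.sum_add_distrib, Finset.sum_add_distrib,
      ← Finset.mul_sum, ← Finset.mul_sum, ← Finset.mul_sum, hsa, hsb, hsc]
    have : (1:ℝ) - δ ≤ ∑ i, a i * b i * c i := hlow
    linarith [hpqr]
  set E : Finset (Fin n) := Finset.univ.filter (fun i =>
    √δ * (a i ^ p + b i ^ q + c i ^ r)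
      ≤ (1/p) * (a i ^ p) + (1/q) * (b i ^ q) + (1/r) * (c i ^ r) - a i * b i * c i)
    with hEdef
  have hsδ : (0:ℝ) < √δ := Real.sqrt_pos.2 hδ0
  refine ⟨E, ?_, ?_⟩
  · -- sum over E is small
    have h1 : √δ * ∑ i ∈ E, (a i ^ p + b i ^ q + c i ^ r)
        ≤ ∑ i ∈ E, ((1/p) * (a i ^ p) + (1/q) * (b i ^ q) + (1/r) * (c i ^ r)
          - a i * b i * c i) := by
      rw [Finset.mul_sum]
      apply Finset.sum_le_sum
      intro i hi
      exact (Finset.mem_filter.1 hi).2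
    have h2 : ∑ i ∈ E, ((1/p) * (a i ^ p) + (1/q) * (b i ^ q) + (1/r) * (c i ^ r)
          - a i * b i * c i)
        ≤ ∑ i, ((1/p) * (a i ^ p) + (1/q) * (b i ^ q) + (1/r) * (c i ^ r)
          - a i * b i * c i) :=
      Finset.sum_le_sum_of_subset_of_nonneg (Finset.subset_univ E) (fun i _ _ => hd0 i)
    have h3 : ∑ i ∈ E, (a i ^ p + b i ^ q + c i ^ r) ≤ δ / √δ := by
      rw [le_div_iff₀ hsδ]
      calc (∑ i ∈ E, (a i ^ p + b i ^ q + c i ^ r)) * √δ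
          = √δ * ∑ i ∈ E, (a i ^ p + b i ^ q + c i ^ r) := by ring
        _ ≤ δ := by linarith
    rw [Real.div_sqrt] at h3
    have h4 : √δ = δ ^ ((1:ℝ)/2) := Real.sqrt_eq_rpow δ
    have h5 : (0:ℝ) ≤ δ ^ ((1:ℝ)/2) := Real.rpow_nonneg hδ0.le _
    calc ∑ i ∈ E, (a i ^ p + b i ^ q + c i ^ r) ≤ √δ := h3
      _ = 1 * δ ^ ((1:ℝ)/2) := by rw [h4]; ring
      _ ≤ K * δ ^ ((1:ℝ)/2) := by
          have h6 : 0 ≤ (K - 1) * δ ^ ((1:ℝ)/2) := mul_nonneg (by linarith) h5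
          linarith
  · -- pointwise closeness off E
    intro i hiE
    have hnot : ¬ (√δ * (a i ^ p + b i ^ q + c i ^ r)
        ≤ (1/p) * (a i ^ p) + (1/q) * (b i ^ q) + (1/r) * (c i ^ r) - a i * b i * c i) := by
      intro hcon
      exact hiE (Finset.mem_filter.2 ⟨Finset.mem_univ i, hcon⟩)
    push_neg at hnot
    have hδ4 : (0:ℝ) ≤ K * δ ^ ((1:ℝ)/4) := by
      have h' : (0:ℝ) ≤ δ ^ ((1:ℝ)/4) := Real.rpow_nonneg hδ0.le _
      exact mul_nonneg (by linarith) h'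
    obtain ⟨x, hxdef⟩ : ∃ t : ℝ, a i ^ p = t := ⟨_, rfl⟩
    obtain ⟨y, hydef⟩ : ∃ t : ℝ, b i ^ q = t := ⟨_, rfl⟩
    obtain ⟨z, hzdef⟩ : ∃ t : ℝ, c i ^ r = t := ⟨_, rfl⟩
    obtain ⟨P, hPdef⟩ : ∃ t : ℝ, a i * b i * c i = t := ⟨_, rfl⟩
    rw [hxdef, hydef, hzdef]
    have hx : 0 ≤ x := hxdef ▸ hx0 i
    have hy : 0 ≤ y := hydef ▸ hy0 i
    have hz : 0 ≤ z := hzdef ▸ hz0 i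
    have hnot' : (1/p) * x + (1/q) * y + (1/r) * z - P < √δ * (x + y + z) := by
      rw [← hxdef, ← hydef, ← hzdef, ← hPdef]
      exact hnot
    have hkey' : P + c₀ * ((√x - √y) ^ 2 + (√y - √z) ^ 2 + (√x - √z) ^ 2)
        ≤ (1/p) * x + (1/q) * y + (1/r) * z := by
      have h := hkey x y z hx hy hz
      have h2 := habc i
      rw [hxdef, hydef, hzdef, hPdef] at h2
      rw [← h2] at h
      exact h
    rcases eq_or_lt_of_le (by linarith : (0:ℝ) ≤ x + y + z) with hs | hs
    · -- all zero
      have hxz : x = 0 := by linarith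
      have hyz : y = 0 := by linarith
      have hzz : z = 0 := by linarith
      exact ⟨0, 0, by simpa using hδ4, by simpa using hδ4,
        by rw [hxz, hyz]; ring, by rw [hxz, hzz]; ring⟩
    · -- positive total mass
      obtain ⟨s, hsdef⟩ : ∃ t : ℝ, x + y + z = t := ⟨_, rfl⟩
      rw [hsdef] at hs hnot'
      obtain ⟨T, hTdef⟩ : ∃ t : ℝ, √δ * s / c₀ = t := ⟨_, rfl⟩
      have hT0 : 0 ≤ T := by rw [← hTdef]; positivity
      have hQT : (√x - √y) ^ 2 + (√y - √z) ^ 2 + (√x - √z) ^ 2 ≤ T := by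
        rw [← hTdef, le_div_iff₀ hc₀]
        linarith [hkey', hnot']
      have hQ0 : (0:ℝ) ≤ (√x - √y) ^ 2 := sq_nonneg _
      have hxyT : (√x - √y) ^ 2 ≤ T := by
        linarith [hQT, sq_nonneg (√y - √z), sq_nonneg (√x - √z)]
      have hyzT : (√y - √z) ^ 2 ≤ T := by
        linarith [hQT, sq_nonneg (√x - √y), sq_nonneg (√x - √z)]
      have hxzT : (√x - √z) ^ 2 ≤ T := by
        linarith [hQT, sq_nonneg (√x - √y), sq_nonneg (√y - √z)]
      have hδle : √δ ≤ c₀ / 400 := by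
        have h1 := Real.sqrt_le_sqrt hδδ0
        rwa [Real.sqrt_sq (by positivity)] at h1
      have hT400 : T ≤ s / 400 := by
        rw [← hTdef, div_le_div_iff₀ hc₀ (by norm_num : (0:ℝ) < 400)]
        have := mul_le_mul_of_nonneg_right hδle hs.le
        linarith
      have hy4 : s / 4 ≤ y := quarter x y z s T hx hy hz hsdef.symm hT0 hT400 hxyT
        (by linarith [hyzT, sq_abs (√y - √z), sq_nonneg (√y - √z), sq_nonneg (√z - √y),
          (by ring : (√z - √y) ^ 2 = (√y - √z) ^ 2)])
      have hz4 : s / 4 ≤ z := quarter x z y s T hx hz hy (by rw [← hsdef]; ring) hT0 hT400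
        hxzT hyzT
      have hy0' : 0 < y := by linarith
      have hz0' : 0 < z := by linarith
      have hθ1 : |x / y - 1| ≤ 8 * √T / √s :=
        ratio x y s T hx hy hs (by linarith) (by linarith) hy4 hT0 hxyT
      have hθ2 : |x / z - 1| ≤ 8 * √T / √s :=
        ratio x z s T hx hz hs (by linarith) (by linarith) hz4 hT0 hxzT
      -- bound 8√T/√s by K δ^{1/4}
      have hbound : 8 * √T / √s ≤ K * δ ^ ((1:ℝ)/4) := by
        have h1 : √T = √(√δ) * √s / √c₀ := by
          rw [← hTdef, Real.sqrt_div (by positivity) c₀, Real.sqrt_mul (Real.sqrt_nonneg δ)]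
        have hss : (0:ℝ) < √s := Real.sqrt_pos.2 hs
        have h2 : 8 * √T / √s = 8 * √(√δ) / √c₀ := by
          rw [h1]; field_simp
        have h3 : √(√δ) = δ ^ ((1:ℝ)/4) := by
          rw [Real.sqrt_eq_rpow, Real.sqrt_eq_rpow, ← Real.rpow_mul hδ0.le]
          norm_num
        rw [h2, h3, hKdef]
        have h4 : (0:ℝ) ≤ δ ^ ((1:ℝ)/4) := Real.rpow_nonneg hδ0.le _
        have e : 8 * δ ^ ((1:ℝ)/4) / √c₀ = (8 / √c₀) * δ ^ ((1:ℝ)/4) := by ring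
        have e2 : (8 / √c₀ + 1) * δ ^ ((1:ℝ)/4)
            = (8 / √c₀) * δ ^ ((1:ℝ)/4) + δ ^ ((1:ℝ)/4) := by ring
        rw [e, e2]
        linarith
      refine ⟨x / y - 1, x / z - 1, le_trans hθ1 hbound, le_trans hθ2 hbound, ?_, ?_⟩
      · rw [show (1 + (x / y - 1)) = x / y by ring, div_mul_cancel₀ _ hy0'.ne']
      · rw [show (1 + (x / z - 1)) = x / z by ring, div_mul_cancel₀ _ hz0'.ne']
end

section
/- Let n ≥ 3 be an integer, let I = {-⌊(n-1)/2⌋, ..., ⌊n/2⌋} (an interval of n integers), and let q = 4/log_n((2n³+n)/3). Then for all sufficiently small ε > 0, the function f = 1_I + ε δ₀ satisfies ‖f*f‖₂² > ‖f‖_q⁴, where δ₀ is the Kronecker delta at 0. -/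
open Real


section Helpers

lemma bern {θ t : ℝ} (hθ0 : 0 ≤ θ) (hθ1 : θ ≤ 1) (ht : 0 ≤ t) :
    (1 + t) ^ θ ≤ 1 + θ * t := by
  have h := Real.geom_mean_le_arith_mean2_weighted (by linarith : (0:ℝ) ≤ 1 - θ) hθ0
      (by norm_num : (0:ℝ) ≤ 1) (by linarith : (0:ℝ) ≤ 1 + t) (by ring)
  rw [Real.one_rpow, one_mul] at h
  linarith

lemma bern4 {θ x : ℝ} (hθ0 : 0 ≤ θ) (hθ1 : θ ≤ 1) (hx0 : 0 ≤ x) (hx1 : x ≤ 1) :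
    (1 + x) ^ (4 * θ) ≤ 1 + 4*θ*x + 11*θ*x^2 := by
  have h4 : ((1+x):ℝ) ^ (4:ℝ) = 1 + (4*x + 6*x^2 + 4*x^3 + x^4) := by
    rw [show (4:ℝ) = ((4:ℕ):ℝ) by norm_num, Real.rpow_natCast]; ring
  have hb := bern hθ0 hθ1 (t := 4*x + 6*x^2 + 4*x^3 + x^4) (by positivity)
  calc (1 + x) ^ (4 * θ) = ((1+x) ^ (4:ℝ)) ^ θ := by
        rw [← Real.rpow_mul (by linarith)]
    _ = (1 + (4*x + 6*x^2 + 4*x^3 + x^4)) ^ θ := by rw [h4]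
    _ ≤ 1 + θ * (4*x + 6*x^2 + 4*x^3 + x^4) := hb
    _ ≤ 1 + 4*θ*x + 11*θ*x^2 := by
        nlinarith [mul_nonneg hθ0 (sq_nonneg x),
          mul_nonneg (mul_nonneg hθ0 (sq_nonneg x)) hx0,
          mul_nonneg (mul_nonneg (mul_nonneg hθ0 hx0) hx0) (sq_nonneg x)]

lemma sum_Icc_split (F : ℤ → ℝ) (a b c : ℤ) (h1 : a ≤ b + 1) (h2 : b ≤ c) :
    ∑ s ∈ Finset.Icc a c, F s = ∑ s ∈ Finset.Icc a b, F s + ∑ s ∈ Finset.Icc (b+1) c, F s := by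
  rw [← Finset.sum_union (by
    simp only [Finset.disjoint_left, Finset.mem_Icc]
    intro x hx hx2; omega)]
  congr 1
  ext x; simp only [Finset.mem_Icc, Finset.mem_union]; omega

lemma sum_Icc_range (F : ℤ → ℝ) (a : ℤ) (m : ℕ) :
    ∑ s ∈ Finset.Icc a (a + m - 1), F s = ∑ k ∈ Finset.range m, F (a + k) := by
  induction m with
  | zero => rw [Finset.Icc_eq_empty (by omega)]; simp
  | succ m ih =>
    have hins : Finset.Icc a (a + (m+1:ℕ) - 1) = insert (a + m) (Finset.Icc a (a + m - 1)) := by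
      ext x; simp only [Finset.mem_Icc, Finset.mem_insert]; omega
    rw [hins, Finset.sum_insert (by simp only [Finset.mem_Icc]; omega), Finset.sum_range_succ, ih]
    ring

lemma sqsum (m : ℕ) : ∑ k ∈ Finset.range m, ((k:ℝ)+1)^2 = (m*(m+1)*(2*m+1)/6 : ℝ) := by
  induction m with
  | zero => simp
  | succ m ih => rw [Finset.sum_range_succ, ih]; push_cast; ring

lemma idsum (m : ℕ) : ∑ k ∈ Finset.range m, (k:ℝ) = (m*(m-1)/2 : ℝ) := by
  induction m with
  | zero => simp
  | succ m ih => rw [Finset.sum_range_succ, ih]; push_cast; ring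

lemma sqsum' (m : ℕ) : ∑ k ∈ Finset.range m, ((m:ℝ)-k)^2 = (m*(m+1)*(2*m+1)/6 : ℝ) := by
  rw [← sqsum m, ← Finset.sum_range_reflect (fun j => ((j:ℝ)+1)^2) m]
  apply Finset.sum_congr rfl
  intro k hk
  have hk' := Finset.mem_range.mp hk
  rw [show m - 1 - k = m - (1 + k) from by omega, Nat.cast_sub (by omega)]
  push_cast; ring

end Helpers

set_option maxHeartbeats 2000000 in
theorem aux17 (n : ℕ) (L R : ℤ) (ε q p : ℝ) (F : ℤ → ℝ) (hn : 3 ≤ n)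
    (hL : L ≤ -1) (hR : 1 ≤ R) (hRL : R - L + 1 = (n:ℤ)) (hd : R + L = 0 ∨ R + L = 1)
    (hq : q = 4 / p) (hp2 : 2 < p) (hp4 : p < 4)
    (hpE : (n:ℝ) ^ p = (2*(n:ℝ)^3 + n)/3)
    (hε : 0 < ε) (hεb : ε ≤ 1/54000)
    (hF : F = fun a : ℤ =>
      (if a ∈ Finset.Icc L R then (1:ℝ) else 0) + (if a = 0 then ε else 0)) :
    (∑' s : ℤ, (∑' a : ℤ, F a * F (s - a)) ^ 2) > (∑' a : ℤ, F a ^ q) ^ (4 / q) := by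
    -- basic numbers
  have hn3 : (3:ℝ) ≤ (n:ℝ) := by exact_mod_cast hn
  have hn0 : (0:ℝ) < n := by linarith
  have hp0 : 0 < p := by linarith
  have hq0 : 0 < q := by rw [hq]; positivity
  have h4q : 4 / q = p := by rw [hq]; field_simp
  have hpq : p * q = 4 := by rw [hq]; field_simp
  have hq2 : q ≤ 2 := by rw [hq, div_le_iff₀ hp0]; linarith
  set I : Finset ℤ := Finset.Icc L R with hI
  set J : Finset ℤ := Finset.Icc (2*L) (2*R) with hJ
  have h0I : (0:ℤ) ∈ I := by rw [hI]; rw [Finset.mem_Icc]; omega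
  classical
  set χ : ℤ → ℝ := fun a => if a ∈ I then (1:ℝ) else 0 with hχ
  set dd : ℤ → ℝ := fun a => if a = (0:ℤ) then (1:ℝ) else 0 with hdd
  set g : ℤ → ℝ := fun s => ∑ a ∈ I, χ (s - a) with hg
  have hχ0 : ∀ a, 0 ≤ χ a := by intro a; rw [hχ]; dsimp only; split <;> norm_num
  have hdd0 : ∀ a, 0 ≤ dd a := by intro a; rw [hdd]; dsimp only; split <;> norm_num
  have hg0 : ∀ s, 0 ≤ g s := fun s => Finset.sum_nonneg fun a _ => hχ0 _
  have hFeq : ∀ a, F a = χ a + ε * dd a := by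
    intro a; rw [hF, hχ, hdd]; dsimp only; by_cases h : a = 0 <;> simp [h]
  have hFout : ∀ b, b ∉ I → F b = 0 := by
    intro b hb
    have hb0 : b ≠ 0 := fun h => hb (h ▸ h0I)
    rw [hFeq, hχ, hdd]; dsimp only; rw [if_neg hb, if_neg hb0]; ring
  -- inner sum
  have hinner : ∀ s : ℤ, (∑' a : ℤ, F a * F (s - a)) = g s + 2*ε*χ s + ε^2 * dd s := by
    intro s
    rw [tsum_eq_sum (s := I) (fun b hb => by rw [hFout b hb, zero_mul])]
    have e1 : ∀ a ∈ I, F a * F (s - a)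
        = χ (s - a) + ε * dd (s - a) + ε * (if a = 0 then χ (s - a) else 0)
          + ε^2 * (if a = 0 then dd (s - a) else 0) := by
      intro a ha
      have hχa : χ a = 1 := by rw [hχ]; dsimp only; rw [if_pos ha]
      have hX : ∀ c : ℝ, (if a = 0 then c else 0) = dd a * c := by
        intro c; rw [hdd]; dsimp only; split <;> simp
      rw [hFeq, hFeq, hχa, hX (χ (s - a)), hX (dd (s - a))]
      ring
    have e2 : ∀ a ∈ I, dd (s - a) = if a = s then (1:ℝ) else 0 := by
      intro a _
      rw [hdd]; dsimp only
      by_cases h : a = s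
      · rw [if_pos (by omega), if_pos h]
      · rw [if_neg (by omega), if_neg h]
    rw [Finset.sum_congr rfl e1]
    rw [Finset.sum_congr rfl (fun a ha => by rw [e2 a ha] :
      ∀ a ∈ I, χ (s - a) + ε * dd (s - a) + ε * (if a = 0 then χ (s - a) else 0)
          + ε^2 * (if a = 0 then dd (s - a) else 0)
        = χ (s - a) + ε * (if a = s then (1:ℝ) else 0) + ε * (if a = 0 then χ (s - a) else 0)
          + ε^2 * (if a = 0 then dd (s - a) else 0))]
    rw [Finset.sum_add_distrib, Finset.sum_add_distrib, Finset.sum_add_distrib,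
      ← Finset.mul_sum, ← Finset.mul_sum, ← Finset.mul_sum,
      Finset.sum_ite_eq' I s (fun _ => (1:ℝ)), Finset.sum_ite_eq' I 0 (fun a => χ (s - a)),
      Finset.sum_ite_eq' I 0 (fun a => dd (s - a)), if_pos h0I, if_pos h0I, sub_zero]
    have hχs : (if s ∈ I then (1:ℝ) else 0) = χ s := by rw [hχ]
    rw [hχs, hg]
    ring
  -- outer support
  have hgout : ∀ s : ℤ, s ∉ J → g s = 0 ∧ χ s = 0 ∧ dd s = 0 := by
    intro s hs
    have hsJ : ¬ (2*L ≤ s ∧ s ≤ 2*R) := by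
      intro h; exact hs (by rw [hJ, Finset.mem_Icc]; exact h)
    refine ⟨?_, ?_, ?_⟩
    · rw [hg]; dsimp only
      apply Finset.sum_eq_zero
      intro a ha
      have haI := Finset.mem_Icc.mp (hI ▸ ha)
      rw [hχ]; dsimp only
      rw [if_neg (by rw [hI, Finset.mem_Icc]; omega)]
    · rw [hχ]; dsimp only; rw [if_neg (by rw [hI, Finset.mem_Icc]; omega)]
    · rw [hdd]; dsimp only; rw [if_neg (by omega)]
  have hLHS : (∑' s : ℤ, (∑' a : ℤ, F a * F (s - a)) ^ 2)
      = ∑ s ∈ J, (g s + 2*ε*χ s + ε^2*dd s)^2 := by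
    rw [tsum_congr (fun s => by rw [hinner s] :
      ∀ s : ℤ, (∑' a : ℤ, F a * F (s - a)) ^ 2 = (g s + 2*ε*χ s + ε^2*dd s)^2)]
    exact tsum_eq_sum (fun b hb => by
      obtain ⟨h1, h2, h3⟩ := hgout b hb
      rw [h1, h2, h3]; ring)
  -- regional formulas for g
  have hgval : ∀ s : ℤ, 2*L ≤ s → s ≤ 2*R → g s = (((min R (s - L)) - (max L (s - R)) + 1 : ℤ) : ℝ) := by
    intro s h1 h2
    rw [hg]; dsimp only
    have e3 : ∀ a ∈ I, χ (s - a) = if s - a ∈ I then (1:ℝ) else 0 := fun a _ => by rw [hχ]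
    rw [Finset.sum_congr rfl e3, Finset.sum_boole]
    have hfilt : I.filter (fun a => s - a ∈ I) = Finset.Icc (max L (s - R)) (min R (s - L)) := by
      ext x
      simp only [Finset.mem_filter, hI, Finset.mem_Icc, le_min_iff, max_le_iff]
      omega
    rw [hfilt, Int.card_Icc]
    have hnn : (0:ℤ) ≤ min R (s - L) + 1 - max L (s - R) := by
      omega
    rw [show min R (s - L) - max L (s - R) + 1 = min R (s - L) + 1 - max L (s - R) from by ring]
    rw [← Int.toNat_of_nonneg hnn]
    norm_cast
  have hg1 : ∀ s : ℤ, 2*L ≤ s → s ≤ L + R → g s = ((s - 2*L + 1 : ℤ) : ℝ) := by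
    intro s h1 h2
    rw [hgval s h1 (by omega)]
    congr 1
    rw [min_eq_right (by omega), max_eq_left (by omega)]
    ring
  have hg2 : ∀ s : ℤ, L + R + 1 ≤ s → s ≤ 2*R → g s = ((2*R - s + 1 : ℤ) : ℝ) := by
    intro s h1 h2
    rw [hgval s (by omega) h2]
    congr 1
    rw [min_eq_left (by omega), max_eq_right (by omega)]
    ring
  have hcastn : ((n-1:ℕ):ℝ) = (n:ℝ) - 1 := by
    rw [Nat.cast_sub (by omega : 1 ≤ n)]; norm_num
  have hRLr : (R:ℝ) - (L:ℝ) + 1 = (n:ℝ) := by exact_mod_cast hRL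
  -- value of E
  have hEfin : ∑ s ∈ J, g s ^ 2 = (2*(n:ℝ)^3 + n)/3 := by
    rw [hJ, sum_Icc_split (fun s => g s ^ 2) (2*L) (L+R) (2*R) (by omega) (by omega)]
    have hpc1 : ∑ s ∈ Finset.Icc (2*L) (L+R), g s ^ 2 = ∑ k ∈ Finset.range n, ((k:ℝ)+1)^2 := by
      rw [show L + R = 2*L + (n:ℕ) - 1 from by omega, sum_Icc_range (fun s => g s^2) (2*L) n]
      apply Finset.sum_congr rfl
      intro k hk
      have hk' := Finset.mem_range.mp hk
      rw [hg1 (2*L + k) (by omega) (by omega)]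
      push_cast; ring
    have hpc2 : ∑ s ∈ Finset.Icc (L+R+1) (2*R), g s ^ 2
        = ∑ k ∈ Finset.range (n-1), (((n-1:ℕ):ℝ) - k)^2 := by
      rw [show 2*R = (L+R+1) + ((n-1:ℕ):ℤ) - 1 from by omega,
        sum_Icc_range (fun s => g s^2) (L+R+1) (n-1)]
      apply Finset.sum_congr rfl
      intro k hk
      have hk' := Finset.mem_range.mp hk
      rw [hg2 (L+R+1 + k) (by omega) (by omega)]
      rw [hcastn]
      push_cast
      have : (2*(R:ℝ) - ((L:ℝ)+(R:ℝ)+1+(k:ℝ)) + 1) = (n:ℝ) - 1 - k := by linarith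
      rw [← this]
    rw [hpc1, hpc2, sqsum, sqsum', hcastn]
    ring
  -- value of S
  obtain ⟨a', ha'⟩ : ∃ a' : ℕ, (a':ℤ) = -L := ⟨(-L).toNat, Int.toNat_of_nonneg (by omega)⟩
  obtain ⟨b', hb'⟩ : ∃ b' : ℕ, (b':ℤ) = R := ⟨R.toNat, Int.toNat_of_nonneg (by omega)⟩
  have ha'r : ((a':ℕ):ℝ) = -(L:ℝ) := by exact_mod_cast ha'
  have hb'r : ((b':ℕ):ℝ) = (R:ℝ) := by exact_mod_cast hb'
  have hSfin : 3*(n:ℝ)^2 ≤ 4 * ∑ s ∈ I, g s := by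
    rw [hI, sum_Icc_split (fun s => g s) L (L+R) R (by omega) (by omega)]
    have hq1 : ∑ s ∈ Finset.Icc L (L+R), g s
        = ∑ k ∈ Finset.range (b'+1), ((k:ℝ) + (((a':ℕ):ℝ) + 1)) := by
      rw [show L + R = L + ((b'+1:ℕ):ℤ) - 1 from by omega, sum_Icc_range (fun s => g s) L (b'+1)]
      apply Finset.sum_congr rfl
      intro k hk
      have hk' := Finset.mem_range.mp hk
      rw [hg1 (L + k) (by omega) (by omega)]
      push_cast
      linarith [ha'r]
    have hq2 : ∑ s ∈ Finset.Icc (L+R+1) R, g s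
        = ∑ k ∈ Finset.range a', ((((a':ℕ):ℝ) + ((b':ℕ):ℝ)) - (k:ℝ)) := by
      rw [show Finset.Icc (L+R+1) R = Finset.Icc (L+R+1) ((L+R+1) + ((a':ℕ):ℤ) - 1) from by
        congr 1; omega]
      rw [sum_Icc_range (fun s => g s) (L+R+1) a']
      apply Finset.sum_congr rfl
      intro k hk
      have hk' := Finset.mem_range.mp hk
      rw [hg2 (L+R+1 + k) (by omega) (by omega)]
      push_cast
      linarith [ha'r, hb'r]
    have hv1 : ∑ k ∈ Finset.range (b'+1), ((k:ℝ) + (((a':ℕ):ℝ) + 1))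
        = (((b'+1:ℕ)):ℝ)*(((b'+1:ℕ)):ℝ)/2 + ((b':ℕ):ℝ)*(((b'+1:ℕ)):ℝ)/2
          - ((b'+1:ℕ):ℝ)*(((b'+1:ℕ)):ℝ)/2 + ((b'+1:ℕ):ℝ) * (((a':ℕ):ℝ) + 1)
          + (((b'+1:ℕ)):ℝ)*((((b'+1:ℕ)):ℝ)-1)/2 - ((b':ℕ):ℝ)*(((b'+1:ℕ)):ℝ)/2 := by
      rw [Finset.sum_add_distrib, idsum, Finset.sum_const, Finset.card_range, nsmul_eq_mul]
      push_cast; ring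
    have hv2 : ∑ k ∈ Finset.range a', ((((a':ℕ):ℝ) + ((b':ℕ):ℝ)) - (k:ℝ))
        = ((a':ℕ):ℝ) * (((a':ℕ):ℝ) + ((b':ℕ):ℝ)) - ((a':ℕ):ℝ)*(((a':ℕ):ℝ)-1)/2 := by
      rw [Finset.sum_sub_distrib, idsum, Finset.sum_const, Finset.card_range, nsmul_eq_mul]
    have hcase : a' = b' ∨ b' = a' + 1 := by omega
    have hnr : (n:ℝ) = ((a':ℕ):ℝ) + ((b':ℕ):ℝ) + 1 := by
      rw [ha'r, hb'r]; linarith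
    rw [hq1, hq2, hv1, hv2, hnr]
    rcases hcase with h | h
    · subst h; push_cast; linarith
    · subst h; push_cast; linarith
  -- value of the q-sum
  have hcard : ((I.card : ℕ) : ℝ) = (n:ℝ) := by
    rw [hI, Int.card_Icc, show (R + 1 - L).toNat = n from by omega]
  have hRHSval : (∑' a : ℤ, F a ^ q) = (n:ℝ) - 1 + (1+ε)^q := by
    rw [tsum_eq_sum (s := I) (fun b hb => by rw [hFout b hb, Real.zero_rpow (ne_of_gt hq0)])]
    have e4 : ∀ a ∈ I, F a ^ q = 1 + (if a = (0:ℤ) then ((1+ε)^q - 1) else 0) := by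
      intro a ha
      rw [hFeq]
      have hχa : χ a = 1 := by rw [hχ]; dsimp only; rw [if_pos ha]
      rw [hχa, hdd]; dsimp only
      by_cases h : a = 0
      · rw [if_pos h, if_pos h, mul_one]; ring
      · rw [if_neg h, if_neg h, mul_zero, add_zero, Real.one_rpow]
    rw [Finset.sum_congr rfl e4, Finset.sum_add_distrib, Finset.sum_const,
      Finset.sum_ite_eq' I 0 (fun _ => (1+ε)^q - 1), if_pos h0I, nsmul_eq_mul, mul_one, hcard]
    ring
  -- upper bounds
  have htsum0 : 0 ≤ (∑' a : ℤ, F a ^ q) := by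
    rw [hRHSval]
    have := Real.rpow_nonneg (by linarith : (0:ℝ) ≤ 1+ε) q
    linarith
  have hup1 : (1+ε)^q ≤ 1 + q*ε + 6*ε^2 := by
    have hb := bern4 (θ := q/4) (by positivity) (by linarith) hε.le (by linarith)
    rw [show 4*(q/4) = q from by ring] at hb
    have hfact : 0 ≤ (2 - q) * ε^2 := mul_nonneg (by linarith) (sq_nonneg ε)
    nlinarith [hb, hfact, sq_nonneg ε]
  set δ : ℝ := (q*ε + 6*ε^2)/(n:ℝ) with hδ
  clear_value δ
  have hδ0 : 0 ≤ δ := by rw [hδ]; positivity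
  have hδle : δ ≤ 3*ε/(n:ℝ) := by
    rw [hδ, div_le_div_iff_of_pos_right hn0]
    linarith [mul_nonneg (by linarith : (0:ℝ) ≤ 2 - q) hε.le,
      mul_nonneg hε.le (by linarith : (0:ℝ) ≤ 1/54000 - ε)]
  have hδ1 : δ ≤ 1 := by
    refine le_trans hδle ?_
    rw [div_le_one hn0]
    linarith
  have hup2 : (1+δ)^p ≤ 1 + p*δ + 11*δ^2 := by
    have hb := bern4 (θ := p/4) (by positivity) (by linarith) hδ0 hδ1
    rw [show 4*(p/4) = p from by ring] at hb
    have hfact : 0 ≤ (4 - p) * δ^2 := mul_nonneg (by linarith) (sq_nonneg δ)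
    linarith [hb, hfact]
  have hSig : (∑' a : ℤ, F a ^ q) ≤ (n:ℝ) * (1 + δ) := by
    rw [hRHSval, hδ]
    have hexp : (n:ℝ) * (1 + (q*ε+6*ε^2)/(n:ℝ)) = (n:ℝ) + (q*ε + 6*ε^2) := by
      field_simp
    rw [hexp]
    linarith [hup1]
  have hRHSle : (∑' a : ℤ, F a ^ q) ^ (4/q)
      ≤ ((2*(n:ℝ)^3 + n)/3) * (1 + (p*δ + 11*δ^2)) := by
    rw [h4q]
    calc (∑' a : ℤ, F a ^ q) ^ p ≤ ((n:ℝ)*(1+δ))^p :=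
          Real.rpow_le_rpow htsum0 hSig (le_of_lt hp0)
      _ = (n:ℝ)^p * (1+δ)^p := Real.mul_rpow (le_of_lt hn0) (by linarith)
      _ = ((2*(n:ℝ)^3+n)/3) * (1+δ)^p := by rw [hpE]
      _ ≤ ((2*(n:ℝ)^3 + n)/3) * (1 + (p*δ + 11*δ^2)) := by
          apply mul_le_mul_of_nonneg_left (by linarith [hup2]) (by positivity)
  -- key numeric bound
  have hpδ : p * δ = (4*ε + 6*p*ε^2)/(n:ℝ) := by
    rw [hδ, ← mul_div_assoc]
    congr 1
    linear_combination ε * hpq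
  have hkey : p*δ + 11*δ^2 ≤ (4*ε + 57*ε^2)/(n:ℝ) := by
    have k1 : p*δ ≤ (4*ε + 24*ε^2)/(n:ℝ) := by
      rw [hpδ, div_le_div_iff_of_pos_right hn0]
      nlinarith [sq_nonneg ε, mul_nonneg (by linarith : (0:ℝ) ≤ 4 - p) (sq_nonneg ε)]
    have k2 : 11*δ^2 ≤ 33*ε^2/(n:ℝ) := by
      have hsq : δ^2 ≤ (3*ε/(n:ℝ))^2 := pow_le_pow_left₀ hδ0 hδle 2
      have h9 : (3*ε/(n:ℝ))^2 = 9*ε^2/((n:ℝ)^2) := by field_simp; ring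
      have h33 : 9*ε^2/((n:ℝ)^2) ≤ 3*ε^2/(n:ℝ) := by
        rw [div_le_div_iff₀ (by positivity) hn0]
        nlinarith [mul_nonneg (mul_nonneg (sq_nonneg ε) (le_of_lt hn0)) (by linarith : (0:ℝ) ≤ (n:ℝ) - 3)]
      calc 11*δ^2 ≤ 11*(9*ε^2/((n:ℝ)^2)) := by rw [← h9]; linarith [hsq]
        _ ≤ 11*(3*ε^2/(n:ℝ)) := by linarith [h33]
        _ = 33*ε^2/(n:ℝ) := by ring
    calc p*δ + 11*δ^2 ≤ (4*ε + 24*ε^2)/(n:ℝ) + 33*ε^2/(n:ℝ) := by linarith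
      _ = (4*ε + 57*ε^2)/(n:ℝ) := by ring
  have hfinal : ((2*(n:ℝ)^3+n)/3) * ((4*ε+57*ε^2)/(n:ℝ)) < 3*(n:ℝ)^2*ε := by
    rw [div_mul_div_comm, div_lt_iff₀ (by positivity)]
    have h9 : 9 ≤ (n:ℝ)^2 := by nlinarith [hn3]
    have f0 : 0 < (n:ℝ)^3*ε := by positivity
    have f1 : 0 ≤ (n:ℝ)^3*ε*(1/54000 - ε) := by
      apply mul_nonneg (by positivity); linarith
    have f2 : 0 ≤ (n:ℝ)*ε*((n:ℝ)^2 - 9) := by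
      apply mul_nonneg (by positivity); linarith
    have f3 : 0 ≤ (n:ℝ)*ε*(1/54000 - ε) := by
      apply mul_nonneg (by positivity); linarith
    nlinarith [f0, f1, f2, f3]
  -- lower bound for the LHS
  have hsub : I ⊆ J := by
    intro x hx
    rw [hI, Finset.mem_Icc] at hx
    rw [hJ, Finset.mem_Icc]
    omega
  have hSrw : ∑ s ∈ I, g s = ∑ s ∈ J, g s * χ s := by
    calc ∑ s ∈ I, g s = ∑ s ∈ I, g s * χ s :=
          Finset.sum_congr rfl (fun s hs => by
            rw [hχ]; dsimp only; rw [if_pos hs, mul_one])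
      _ = ∑ s ∈ J, g s * χ s :=
          Finset.sum_subset hsub (fun x _ hx => by
            rw [hχ]; dsimp only; rw [if_neg hx, mul_zero])
  have hstep : ∀ s ∈ J, g s^2 + 4*ε*(g s * χ s) ≤ (g s + 2*ε*χ s + ε^2*dd s)^2 := by
    intro s _
    nlinarith [sq_nonneg (2*ε*χ s + ε^2*dd s),
      mul_nonneg (hg0 s) (mul_nonneg (sq_nonneg ε) (hdd0 s))]
  have hlow : ∑ s ∈ J, g s^2 + ε*(3*(n:ℝ)^2) ≤ ∑ s ∈ J, (g s + 2*ε*χ s + ε^2*dd s)^2 := by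
    have h1 : ∑ s ∈ J, (g s^2 + 4*ε*(g s * χ s))
        = ∑ s ∈ J, g s^2 + 4*ε*(∑ s ∈ I, g s) := by
      rw [Finset.sum_add_distrib, ← Finset.mul_sum, ← hSrw]
    have h2 : ε*(3*(n:ℝ)^2) ≤ 4*ε*(∑ s ∈ I, g s) := by
      have := mul_le_mul_of_nonneg_left hSfin (le_of_lt hε)
      linarith
    calc ∑ s ∈ J, g s^2 + ε*(3*(n:ℝ)^2) ≤ ∑ s ∈ J, g s^2 + 4*ε*(∑ s ∈ I, g s) := by linarith
      _ = ∑ s ∈ J, (g s^2 + 4*ε*(g s * χ s)) := h1.symm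
      _ ≤ ∑ s ∈ J, (g s + 2*ε*χ s + ε^2*dd s)^2 := Finset.sum_le_sum hstep
  -- conclude
  rw [hLHS]
  have c2 : ((2*(n:ℝ)^3+n)/3) * (1 + (p*δ + 11*δ^2))
      ≤ ((2*(n:ℝ)^3+n)/3) * (1 + (4*ε+57*ε^2)/(n:ℝ)) :=
    mul_le_mul_of_nonneg_left (by linarith [hkey]) (by positivity)
  have c3 : ((2*(n:ℝ)^3+n)/3) * (1 + (4*ε+57*ε^2)/(n:ℝ))
      = (2*(n:ℝ)^3+n)/3 + ((2*(n:ℝ)^3+n)/3) * ((4*ε+57*ε^2)/(n:ℝ)) := by ring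
  have c4 : (2*(n:ℝ)^3+n)/3 + ((2*(n:ℝ)^3+n)/3) * ((4*ε+57*ε^2)/(n:ℝ))
      < ∑ s ∈ J, g s^2 + ε*(3*(n:ℝ)^2) := by
    rw [hEfin]
    linarith [hfinal]
  linarith [hRHSle, c2, hlow, c4, c3.le, c3.ge]

/-- For `n ≥ 3`, `I = {-⌊(n-1)/2⌋,...,⌊n/2⌋}` and `q = 4/log_n((2n³+n)/3)`, the perturbed
indicator `f = 1_I + ε δ₀` satisfies `‖f*f‖₂² > ‖f‖_q⁴` for all small `ε > 0`. -/
theorem stmt_17 (n : ℕ) (hn : 3 ≤ n) :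
    ∃ ε₀ > (0:ℝ), ∀ ε : ℝ, 0 < ε → ε ≤ ε₀ →
      (fun (f : ℤ → ℝ) =>
        (∑' s : ℤ, (∑' a : ℤ, f a * f (s - a)) ^ 2)
          > (∑' a : ℤ, f a ^ (4 / Real.logb n ((2 * n ^ 3 + n) / 3)))
              ^ (4 / (4 / Real.logb n ((2 * n ^ 3 + n) / 3))))
        (fun a : ℤ =>
          (if a ∈ Finset.Icc (-(((n - 1) / 2 : ℕ) : ℤ)) (((n / 2 : ℕ) : ℤ)) then 1 else 0)
            + (if a = 0 then ε else 0)) := by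
  refine ⟨1/54000, by norm_num, ?_⟩
  intro ε hε hεb
  have hn3 : (3:ℝ) ≤ (n:ℝ) := by exact_mod_cast hn
  have hn1 : (1:ℝ) < (n:ℝ) := by linarith
  have hE0 : (0:ℝ) < (2*(n:ℝ)^3 + n)/3 := by positivity
  have hcube : 0 ≤ (n:ℝ)^2 * ((n:ℝ) - 3) := mul_nonneg (sq_nonneg _) (by linarith)
  have hquart : 0 ≤ (n:ℝ)^3 * ((n:ℝ) - 3) := mul_nonneg (by positivity) (by linarith)
  have hp2 : 2 < Real.logb n ((2*(n:ℝ)^3 + n)/3) := by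
    rw [Real.lt_logb_iff_rpow_lt hn1 hE0,
      show (2:ℝ) = ((2:ℕ):ℝ) by norm_num, Real.rpow_natCast]
    nlinarith [hcube, hn3]
  have hp4 : Real.logb n ((2*(n:ℝ)^3+n)/3) < 4 := by
    rw [Real.logb_lt_iff_lt_rpow hn1 hE0,
      show (4:ℝ) = ((4:ℕ):ℝ) by norm_num, Real.rpow_natCast]
    nlinarith [hquart, hcube, hn3]
  have hpE : (n:ℝ) ^ (Real.logb n ((2*(n:ℝ)^3+n)/3)) = (2*(n:ℝ)^3+n)/3 :=
    Real.rpow_logb (by linarith) (by linarith) hE0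
  exact aux17 n (-(((n-1)/2:ℕ):ℤ)) (((n/2:ℕ)):ℤ) ε _ _ _ hn (by omega) (by omega)
    (by omega) (by omega) rfl hp2 hp4 hpE hε hεb rfl
end

section
/- Let n ≥ 3 and let I = {-⌊(n-1)/2⌋,...,⌊n/2⌋}. Then Σ_{a∈I} (1_I * 1_I)(a) = ⌈3n²/4⌉, where 1_I*1_I(a) = #{(x,y) ∈ I×I : x+y = a}. -/
open Finset

lemma gauss_int (M : ℕ) : 2 * ∑ k ∈ range M, (k : ℤ) = M * (M - 1) := by
  induction M with
  | zero => simp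
  | succ M ih =>
      rw [Finset.sum_range_succ]
      push_cast
      push_cast at ih
      linarith

lemma sum_min_aux (m n : ℕ) (h : m ≤ n) :
    2 * ∑ k ∈ range n, min (m : ℤ) (k : ℤ)
      = (m : ℤ) * (m - 1) + 2 * (((n : ℤ) - m) * m) := by
  induction n, h using Nat.le_induction with
  | base =>
      have he : ∑ k ∈ range m, min (m : ℤ) (k : ℤ) = ∑ k ∈ range m, (k : ℤ) :=
        Finset.sum_congr rfl fun k hk => by
          have := Finset.mem_range.mp hk
          omega
      rw [he, gauss_int]
      ring
  | succ n hn ih =>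
      rw [Finset.sum_range_succ, min_eq_left (by exact_mod_cast hn)]
      push_cast
      push_cast at ih
      linarith

/-- For `n ≥ 3` and `I = {-⌊(n-1)/2⌋,...,⌊n/2⌋}`:
`Σ_{a∈I} (1_I * 1_I)(a) = ⌈3n²/4⌉`. -/
theorem stmt_18 (n : ℕ) (hn : 3 ≤ n) :
    (∑ a ∈ Finset.Icc (-(((n - 1) / 2 : ℕ) : ℤ)) (((n / 2 : ℕ) : ℤ)),
        ((Finset.Icc (-(((n - 1) / 2 : ℕ) : ℤ)) (((n / 2 : ℕ) : ℤ)) ×ˢ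
          Finset.Icc (-(((n - 1) / 2 : ℕ) : ℤ)) (((n / 2 : ℕ) : ℤ))).filter
            (fun p => p.1 + p.2 = a)).card : ℤ)
      = ⌈(3 * n ^ 2 : ℚ) / 4⌉ := by
  set L : ℕ := (n - 1) / 2 with hLdef
  set U : ℕ := n / 2 with hUdef
  have hLU : L + U = n - 1 := by omega
  have hLn : L ≤ n := by omega
  have hUn : U ≤ n := by omega
  -- Step 1: card of pairs summing to a equals card of an interval
  have hcard : ∀ a : ℤ,
      ((Finset.Icc (-(L : ℤ)) (U : ℤ) ×ˢ Finset.Icc (-(L : ℤ)) (U : ℤ)).filter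
          (fun p => p.1 + p.2 = a)).card
        = (Finset.Icc (max (-(L : ℤ)) (a - U)) (min (U : ℤ) (a + L))).card := by
    intro a
    apply Finset.card_nbij' (i := Prod.fst) (j := fun x => (x, a - x))
    · intro p hp
      simp only [Finset.mem_coe, Finset.mem_filter, Finset.mem_product, Finset.mem_Icc] at hp
      simp only [Finset.mem_coe, Finset.mem_Icc]
      omega
    · intro x hx
      simp only [Finset.mem_coe, Finset.mem_Icc] at hx
      simp only [Finset.mem_coe, Finset.mem_filter, Finset.mem_product, Finset.mem_Icc]
      omega
    · intro p hp
      simp only [Finset.mem_coe, Finset.mem_filter, Finset.mem_product, Finset.mem_Icc] at hp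
      obtain ⟨x, y⟩ := p
      have hxy : a - x = y := by omega
      simp [hxy]
    · intro x _
      rfl
  -- Step 2: rewrite the sum
  have step1 : (∑ a ∈ Finset.Icc (-(L : ℤ)) (U : ℤ),
        (((Finset.Icc (-(L : ℤ)) (U : ℤ) ×ˢ Finset.Icc (-(L : ℤ)) (U : ℤ)).filter
            (fun p => p.1 + p.2 = a)).card : ℤ))
      = ∑ a ∈ Finset.Icc (-(L : ℤ)) (U : ℤ),
          (min (U : ℤ) (a + L) + 1 - max (-(L : ℤ)) (a - U)) := by
    refine Finset.sum_congr rfl fun a ha => ?_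
    rw [hcard a, Int.card_Icc]
    have ha' := Finset.mem_Icc.mp ha
    rw [Int.toNat_of_nonneg (by omega)]
  -- Step 3: reindex to range n
  have step2 : (∑ a ∈ Finset.Icc (-(L : ℤ)) (U : ℤ),
        (min (U : ℤ) (a + L) + 1 - max (-(L : ℤ)) (a - U)))
      = ∑ k ∈ range n,
          (min (U : ℤ) (k : ℤ) + min (L : ℤ) (((n : ℤ) - 1 - k)) + 1) := by
    apply Finset.sum_nbij' (i := fun a => (a + (L : ℤ)).toNat) (j := fun k => (k : ℤ) - L)
    · intro a ha
      have := Finset.mem_Icc.mp ha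
      simp only [Finset.mem_range]
      omega
    · intro k hk
      have := Finset.mem_range.mp hk
      simp only [Finset.mem_Icc]
      omega
    · intro a ha
      have := Finset.mem_Icc.mp ha
      omega
    · intro k hk
      have := Finset.mem_range.mp hk
      omega
    · intro a ha
      have := Finset.mem_Icc.mp ha
      omega
  -- Step 4: compute the right sum
  have step3 : (∑ k ∈ range n,
        (min (U : ℤ) (k : ℤ) + min (L : ℤ) (((n : ℤ) - 1 - k)) + 1))
      = (∑ k ∈ range n, min (U : ℤ) (k : ℤ))
        + (∑ k ∈ range n, min (L : ℤ) (k : ℤ)) + n := by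
    rw [Finset.sum_add_distrib, Finset.sum_add_distrib, Finset.sum_const,
      Finset.card_range, nsmul_eq_mul, mul_one]
    congr 1
    congr 1
    rw [← Finset.sum_range_reflect (fun k => min (L : ℤ) (k : ℤ)) n]
    refine Finset.sum_congr rfl fun k hk => ?_
    have := Finset.mem_range.mp hk
    have hcast : ((n - 1 - k : ℕ) : ℤ) = (n : ℤ) - 1 - k := by omega
    rw [hcast]
  have hSU := sum_min_aux U n hUn
  have hSL := sum_min_aux L n hLn
  set SU : ℤ := ∑ k ∈ range n, min (U : ℤ) (k : ℤ) with hSUdef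
  set SL : ℤ := ∑ k ∈ range n, min (L : ℤ) (k : ℤ) with hSLdef
  rw [step1, step2, step3]
  -- Step 5: the key bounds
  have hkey : 3 * (n : ℤ) ^ 2 ≤ 4 * (SU + SL + n) ∧
      4 * (SU + SL + n) < 3 * (n : ℤ) ^ 2 + 4 := by
    rcases Nat.even_or_odd n with ⟨m, hm⟩ | ⟨m, hm⟩
    · have hm1 : 1 ≤ m := by omega
      have hU' : (U : ℤ) = m := by omega
      have hL' : (L : ℤ) = (m : ℤ) - 1 := by omega
      have hn' : (n : ℤ) = 2 * m := by omega
      rw [hU', hn'] at hSU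
      rw [hL', hn'] at hSL
      constructor <;> nlinarith [hSU, hSL]
    · have hU' : (U : ℤ) = m := by omega
      have hL' : (L : ℤ) = m := by omega
      have hn' : (n : ℤ) = 2 * m + 1 := by omega
      rw [hU', hn'] at hSU
      rw [hL', hn'] at hSL
      constructor <;> nlinarith [hSU, hSL]
  -- Step 6: conclude via ceiling characterization
  symm
  rw [Int.ceil_eq_iff]
  have h1 := hkey.1
  have h2 := hkey.2
  have h1' : (3 : ℚ) * (n : ℚ) ^ 2 ≤ 4 * ((SU + SL + (n : ℤ) : ℤ) : ℚ) := by
    exact_mod_cast h1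
  have h2' : (4 : ℚ) * ((SU + SL + (n : ℤ) : ℤ) : ℚ) < 3 * (n : ℚ) ^ 2 + 4 := by
    exact_mod_cast h2
  constructor
  · push_cast at h2' ⊢
    linarith
  · push_cast at h1' ⊢
    linarith
end

section
/- Suppose f : ℤ → ℝ≥0 is supported on a set of size n ≥ 2 and has the form f = x·δ₀ + g where g(0) = 0, x > 0, y := ‖g‖_{4/3} satisfies x^{4/3} + y^{4/3} = 1 and y/x ≤ 0.01. Then ‖f*f‖₂ ≤ x² + 3y², and for 4/3 ≤ q ≤ 3/2 with n^{3/4-1/q} ≤ (1+δ)^{1/4} for sufficiently small δ, one has ‖f‖_q² ≥ x² + 3y², hence ‖f*f‖₂ ≤ ‖f‖_q². -/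
open Finset Pointwise

section helpers
private lemma rpow_half_eq_sqrt (a : ℝ) : a ^ ((1:ℝ)/2) = Real.sqrt a := by
  rw [Real.sqrt_eq_rpow]
private lemma rpow_half_sq {a : ℝ} (ha : 0 ≤ a) : (a ^ ((1:ℝ)/2)) ^ 2 = a := by
  rw [rpow_half_eq_sqrt, Real.sq_sqrt ha]
private lemma rpow_half_le {a b : ℝ} (hb : 0 ≤ b) (h : a ≤ b ^ 2) :
    a ^ ((1:ℝ)/2) ≤ b := by
  rw [rpow_half_eq_sqrt]
  calc Real.sqrt a ≤ Real.sqrt (b ^ 2) := Real.sqrt_le_sqrt h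
    _ = b := Real.sqrt_sq hb
private lemma cs_sqrt {ι : Type*} (s : Finset ι) (u v : ι → ℝ) :
    ∑ i ∈ s, u i * v i ≤ (∑ i ∈ s, u i ^ 2) ^ ((1:ℝ)/2) * (∑ i ∈ s, v i ^ 2) ^ ((1:ℝ)/2) := by
  have h := Finset.sum_mul_sq_le_sq_mul_sq s u v
  have hU : (0:ℝ) ≤ ∑ i ∈ s, u i ^ 2 := Finset.sum_nonneg fun i _ => sq_nonneg _
  have hV : (0:ℝ) ≤ ∑ i ∈ s, v i ^ 2 := Finset.sum_nonneg fun i _ => sq_nonneg _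
  rw [rpow_half_eq_sqrt, rpow_half_eq_sqrt]
  have h2 : ∑ i ∈ s, u i * v i ≤ Real.sqrt ((∑ i ∈ s, u i ^ 2) * ∑ i ∈ s, v i ^ 2) := by
    rcases le_or_gt (∑ i ∈ s, u i * v i) 0 with hs | hs
    · exact hs.trans (Real.sqrt_nonneg _)
    · have := Real.sqrt_le_sqrt h
      rwa [Real.sqrt_sq hs.le] at this
  rwa [Real.sqrt_mul hU] at h2

private lemma sum_rpow_le {ι : Type*} (s : Finset ι) (w : ι → ℝ) (hw : ∀ i ∈ s, 0 ≤ w i)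
    {r : ℝ} (hr : 1 ≤ r) : ∑ i ∈ s, w i ^ r ≤ (∑ i ∈ s, w i) ^ r := by
  have hW : (0:ℝ) ≤ ∑ i ∈ s, w i := Finset.sum_nonneg hw
  have step : ∀ i ∈ s, w i ^ r ≤ w i * (∑ j ∈ s, w j) ^ (r - 1) := by
    intro i hi
    rcases eq_or_lt_of_le (hw i hi) with h0 | h0
    · rw [← h0, Real.zero_rpow (by linarith), zero_mul]
    · have hle : w i ≤ ∑ j ∈ s, w j := Finset.single_le_sum hw hi
      calc w i ^ r = w i * w i ^ (r - 1) := by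
            rw [← Real.rpow_one_add' (hw i hi) (by linarith)]; ring_nf
        _ ≤ w i * (∑ j ∈ s, w j) ^ (r - 1) := by
            exact mul_le_mul_of_nonneg_left (Real.rpow_le_rpow (hw i hi) hle (by linarith)) (hw i hi)
  calc ∑ i ∈ s, w i ^ r ≤ ∑ i ∈ s, w i * (∑ j ∈ s, w j) ^ (r - 1) := Finset.sum_le_sum step
    _ = (∑ i ∈ s, w i) * (∑ j ∈ s, w j) ^ (r - 1) := by rw [← Finset.sum_mul]
    _ = (∑ i ∈ s, w i) ^ r := by
        rcases eq_or_lt_of_le hW with h0 | h0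
        · rw [← h0, zero_mul, Real.zero_rpow (by linarith)]
        · rw [← Real.rpow_one_add' h0.le (by linarith)]; ring_nf

private lemma shift_bound (S T : Finset ℤ) (h : ℤ → ℝ)
    (hST : ∀ a ∈ S, ∀ b ∈ S, a + b ∈ T) {a : ℤ} (ha : a ∈ S) :
    ∑ b ∈ S, h (a + b) ^ 2 ≤ ∑ c ∈ T, h c ^ 2 := by
  have himg : ∑ b ∈ S, h (a + b) ^ 2 = ∑ c ∈ S.image (a + ·), h c ^ 2 := by
    rw [Finset.sum_image (by intro x _ y _ hxy; exact add_left_cancel hxy)]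
  rw [himg]
  apply Finset.sum_le_sum_of_subset_of_nonneg
  · intro c hc
    obtain ⟨b, hb, rfl⟩ := Finset.mem_image.mp hc
    exact hST a ha b hb
  · intro i _ _; exact sq_nonneg _

private lemma trilinear (S T : Finset ℤ) (g h : ℤ → ℝ) (hg0 : ∀ a, 0 ≤ g a)
    (hh0 : ∀ a, 0 ≤ h a) (hST : ∀ a ∈ S, ∀ b ∈ S, a + b ∈ T) :
    ∑ p ∈ S ×ˢ S, g p.1 * g p.2 * h (p.1 + p.2) ≤
      (∑ a ∈ S, g a ^ ((4:ℝ)/3)) ^ ((3:ℝ)/2) * (∑ c ∈ T, h c ^ 2) ^ ((1:ℝ)/2) := by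
  set A := ∑ a ∈ S, g a ^ ((4:ℝ)/3) with hA
  set H := ∑ c ∈ T, h c ^ 2 with hH
  have hA0 : 0 ≤ A := Finset.sum_nonneg fun i _ => Real.rpow_nonneg (hg0 i) _
  have hH0 : 0 ≤ H := Finset.sum_nonneg fun i _ => sq_nonneg _
  -- the two "shifted" sums
  have key : ∀ (sel : ℤ × ℤ → ℤ), (∀ p : ℤ × ℤ, p ∈ S ×ˢ S → sel p ∈ S) → True := fun _ _ => trivial
  have hshift1 : ∑ p ∈ S ×ˢ S, g p.1 ^ ((4:ℝ)/3) * h (p.1 + p.2) ^ 2 ≤ A * H := by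
    rw [Finset.sum_product]
    calc ∑ a ∈ S, ∑ b ∈ S, g a ^ ((4:ℝ)/3) * h (a + b) ^ 2
        = ∑ a ∈ S, g a ^ ((4:ℝ)/3) * ∑ b ∈ S, h (a + b) ^ 2 := by
          simp_rw [Finset.mul_sum]
      _ ≤ ∑ a ∈ S, g a ^ ((4:ℝ)/3) * H := by
          apply Finset.sum_le_sum; intro a ha
          exact mul_le_mul_of_nonneg_left (shift_bound S T h hST ha) (Real.rpow_nonneg (hg0 a) _)
      _ = A * H := by rw [← Finset.sum_mul]
  have hshift2 : ∑ p ∈ S ×ˢ S, g p.2 ^ ((4:ℝ)/3) * h (p.1 + p.2) ^ 2 ≤ A * H := by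
    rw [Finset.sum_product_right]
    calc ∑ b ∈ S, ∑ a ∈ S, g b ^ ((4:ℝ)/3) * h (a + b) ^ 2
        = ∑ b ∈ S, g b ^ ((4:ℝ)/3) * ∑ a ∈ S, h (b + a) ^ 2 := by
          simp_rw [Finset.mul_sum, add_comm]
      _ ≤ ∑ b ∈ S, g b ^ ((4:ℝ)/3) * H := by
          apply Finset.sum_le_sum; intro b hb
          exact mul_le_mul_of_nonneg_left (shift_bound S T h hST hb) (Real.rpow_nonneg (hg0 b) _)
      _ = A * H := by rw [← Finset.sum_mul]
  -- second Cauchy–Schwarz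
  have cs2 : ∑ p ∈ S ×ˢ S, (g p.1 * g p.2) ^ ((2:ℝ)/3) * h (p.1 + p.2) ^ 2 ≤ A * H := by
    have expand : ∀ p : ℤ × ℤ, (g p.1 * g p.2) ^ ((2:ℝ)/3) * h (p.1 + p.2) ^ 2
        = (g p.1 ^ ((2:ℝ)/3) * h (p.1 + p.2)) * (g p.2 ^ ((2:ℝ)/3) * h (p.1 + p.2)) := by
      intro p
      rw [Real.mul_rpow (hg0 _) (hg0 _)]
      ring
    rw [Finset.sum_congr rfl fun p _ => expand p]
    calc ∑ p ∈ S ×ˢ S, (g p.1 ^ ((2:ℝ)/3) * h (p.1 + p.2)) * (g p.2 ^ ((2:ℝ)/3) * h (p.1 + p.2))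
        ≤ (∑ p ∈ S ×ˢ S, (g p.1 ^ ((2:ℝ)/3) * h (p.1 + p.2)) ^ 2) ^ ((1:ℝ)/2) *
          (∑ p ∈ S ×ˢ S, (g p.2 ^ ((2:ℝ)/3) * h (p.1 + p.2)) ^ 2) ^ ((1:ℝ)/2) :=
          cs_sqrt _ _ _
      _ ≤ (A * H) ^ ((1:ℝ)/2) * (A * H) ^ ((1:ℝ)/2) := by
          apply mul_le_mul
          · apply Real.rpow_le_rpow (Finset.sum_nonneg fun i _ => sq_nonneg _) ?_ (by norm_num)
            calc ∑ p ∈ S ×ˢ S, (g p.1 ^ ((2:ℝ)/3) * h (p.1 + p.2)) ^ 2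
                = ∑ p ∈ S ×ˢ S, g p.1 ^ ((4:ℝ)/3) * h (p.1 + p.2) ^ 2 := by
                  apply Finset.sum_congr rfl; intro p _
                  rw [mul_pow, ← Real.rpow_natCast (g p.1 ^ ((2:ℝ)/3)) 2, ← Real.rpow_mul (hg0 _)]
                  norm_num
              _ ≤ A * H := hshift1
          · apply Real.rpow_le_rpow (Finset.sum_nonneg fun i _ => sq_nonneg _) ?_ (by norm_num)
            calc ∑ p ∈ S ×ˢ S, (g p.2 ^ ((2:ℝ)/3) * h (p.1 + p.2)) ^ 2
                = ∑ p ∈ S ×ˢ S, g p.2 ^ ((4:ℝ)/3) * h (p.1 + p.2) ^ 2 := by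
                  apply Finset.sum_congr rfl; intro p _
                  rw [mul_pow, ← Real.rpow_natCast (g p.2 ^ ((2:ℝ)/3)) 2, ← Real.rpow_mul (hg0 _)]
                  norm_num
              _ ≤ A * H := hshift2
          · exact Real.rpow_nonneg (Finset.sum_nonneg fun i _ => sq_nonneg _) _
          · exact Real.rpow_nonneg (mul_nonneg hA0 hH0) _
      _ = A * H := by
          rw [← Real.rpow_add' (mul_nonneg hA0 hH0) (by norm_num)]
          norm_num
  -- first Cauchy–Schwarz
  have expand1 : ∀ p : ℤ × ℤ, g p.1 * g p.2 * h (p.1 + p.2)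
      = ((g p.1 * g p.2) ^ ((2:ℝ)/3)) * ((g p.1 * g p.2) ^ ((1:ℝ)/3) * h (p.1 + p.2)) := by
    intro p
    rw [← mul_assoc, ← Real.rpow_add' (mul_nonneg (hg0 _) (hg0 _)) (by norm_num)]
    norm_num
  rw [Finset.sum_congr rfl fun p _ => expand1 p]
  calc ∑ p ∈ S ×ˢ S, ((g p.1 * g p.2) ^ ((2:ℝ)/3)) * ((g p.1 * g p.2) ^ ((1:ℝ)/3) * h (p.1 + p.2))
      ≤ (∑ p ∈ S ×ˢ S, ((g p.1 * g p.2) ^ ((2:ℝ)/3)) ^ 2) ^ ((1:ℝ)/2) *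
        (∑ p ∈ S ×ˢ S, ((g p.1 * g p.2) ^ ((1:ℝ)/3) * h (p.1 + p.2)) ^ 2) ^ ((1:ℝ)/2) :=
        cs_sqrt _ _ _
    _ ≤ (A ^ 2) ^ ((1:ℝ)/2) * (A * H) ^ ((1:ℝ)/2) := by
        apply mul_le_mul
        · apply Real.rpow_le_rpow (Finset.sum_nonneg fun i _ => sq_nonneg _) ?_ (by norm_num)
          have : ∑ p ∈ S ×ˢ S, ((g p.1 * g p.2) ^ ((2:ℝ)/3)) ^ 2
              = ∑ p ∈ S ×ˢ S, g p.1 ^ ((4:ℝ)/3) * g p.2 ^ ((4:ℝ)/3) := by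
            apply Finset.sum_congr rfl; intro p _
            rw [← Real.rpow_natCast ((g p.1 * g p.2) ^ ((2:ℝ)/3)) 2,
              ← Real.rpow_mul (mul_nonneg (hg0 _) (hg0 _)),
              Real.mul_rpow (hg0 _) (hg0 _)]
            norm_num
          rw [this]
          apply le_of_eq
          rw [sq, hA, Finset.sum_mul_sum, Finset.sum_product]
        · apply Real.rpow_le_rpow (Finset.sum_nonneg fun i _ => sq_nonneg _) ?_ (by norm_num)
          calc ∑ p ∈ S ×ˢ S, ((g p.1 * g p.2) ^ ((1:ℝ)/3) * h (p.1 + p.2)) ^ 2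
              = ∑ p ∈ S ×ˢ S, (g p.1 * g p.2) ^ ((2:ℝ)/3) * h (p.1 + p.2) ^ 2 := by
                apply Finset.sum_congr rfl; intro p _
                rw [mul_pow, ← Real.rpow_natCast ((g p.1 * g p.2) ^ ((1:ℝ)/3)) 2,
                  ← Real.rpow_mul (mul_nonneg (hg0 _) (hg0 _))]
                norm_num
            _ ≤ A * H := cs2
        · exact Real.rpow_nonneg (Finset.sum_nonneg fun i _ => sq_nonneg _) _
        · exact Real.rpow_nonneg (sq_nonneg _) _
    _ = A ^ ((3:ℝ)/2) * H ^ ((1:ℝ)/2) := by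
        rw [Real.mul_rpow hA0 hH0, ← Real.rpow_natCast A 2, ← Real.rpow_mul hA0,
          ← mul_assoc, ← Real.rpow_add' hA0 (by norm_num)]
        norm_num

end helpers

open Real

private lemma final_alg {x y q δ Yq : ℝ} (hx : 0 < x) (hy0 : 0 ≤ y)
    (hq1 : 4/3 ≤ q) (hq2 : q ≤ 3/2) (hδ0 : 0 < δ) (hδhalf : δ ≤ 1/2)
    (hYq0 : 0 ≤ Yq) (hYqy : Yq ≤ y ^ q) (hyx : y / x ≤ 0.01)
    (hy43 : y ^ ((4:ℝ)/3) ≤ Yq ^ ((4:ℝ)/(3*q)) * (1 + δ) ^ ((1:ℝ)/3)) :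
    x ^ 2 + 3 * y ^ 2 ≤ (x ^ q + Yq) ^ ((2:ℝ)/q) := by
  have hq0 : (0:ℝ) < q := by linarith
  have hqne : q ≠ 0 := hq0.ne'
  have hxq : 0 < x ^ q := Real.rpow_pos_of_pos hx q
  have hδ1 : (0:ℝ) ≤ 1 + δ := by linarith
  have hxq2 : (x ^ q) ^ ((2:ℝ)/q) = x ^ 2 := by
    rw [← Real.rpow_mul hx.le, show q * ((2:ℝ)/q) = 2 by field_simp, Real.rpow_two]
  rcases eq_or_lt_of_le hy0 with hy00 | hypos
  · have hYq00 : Yq = 0 := by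
      have : y ^ q = 0 := by rw [← hy00, Real.zero_rpow hqne]
      linarith
    rw [hYq00, add_zero, ← hy00, hxq2]
    norm_num
  · have hYqq0 : 0 ≤ Yq ^ ((4:ℝ)/(3*q)) := Real.rpow_nonneg hYq0 _
    have hy2 : y ^ 2 ≤ Yq ^ ((2:ℝ)/q) * (1 + δ) ^ ((1:ℝ)/2) := by
      have hlhs0 : 0 ≤ y ^ ((4:ℝ)/3) := Real.rpow_nonneg hy0 _
      have := Real.rpow_le_rpow hlhs0 hy43 (by norm_num : (0:ℝ) ≤ 3/2)
      rw [← Real.rpow_mul hy0,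
        Real.mul_rpow hYqq0 (Real.rpow_nonneg hδ1 _),
        ← Real.rpow_mul hYq0, ← Real.rpow_mul hδ1] at this
      have e1 : (4:ℝ)/3 * (3/2) = 2 := by norm_num
      have e2 : (4:ℝ)/(3*q) * (3/2) = 2/q := by field_simp; ring
      have e3 : (1:ℝ)/3 * (3/2) = 1/2 := by norm_num
      rw [e1, e2, e3] at this
      rwa [Real.rpow_two] at this
    have hδ43 : (1 + δ) ^ ((1:ℝ)/2) ≤ 4/3 := by
      apply rpow_half_le (by norm_num)
      nlinarith
    have h3y4 : 3 * y ^ 2 ≤ 4 * Yq ^ ((2:ℝ)/q) := by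
      have hYq2q0 : 0 ≤ Yq ^ ((2:ℝ)/q) := Real.rpow_nonneg hYq0 _
      nlinarith [hy2, hδ43, hYq2q0, Real.rpow_nonneg hδ1 ((1:ℝ)/2)]
    have hYqpos : 0 < Yq := by
      rcases eq_or_lt_of_le hYq0 with h0 | h0
      · exfalso
        rw [← h0, Real.zero_rpow (by positivity : (2:ℝ)/q ≠ 0)] at h3y4
        nlinarith
      · exact h0
    set lam : ℝ := Yq / x ^ q with hlamdef
    have hlampos : 0 < lam := div_pos hYqpos hxq
    have hlamle : lam ≤ 0.01 := by
      have hyx1 : y / x ≤ 1 := hyx.trans (by norm_num)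
      have hyxpos : 0 < y / x := div_pos hypos hx
      have h1 : (y/x) ^ q ≤ (y/x) ^ (1:ℝ) :=
        Real.rpow_le_rpow_of_exponent_ge hyxpos hyx1 (by linarith)
      rw [Real.rpow_one] at h1
      have h2 : lam ≤ (y/x) ^ q := by
        rw [hlamdef, Real.div_rpow hy0 hx.le]
        gcongr
      linarith
    have hbern : 1 + (2/q) * lam ≤ (1 + lam) ^ ((2:ℝ)/q) :=
      one_add_mul_self_le_rpow_one_add (by linarith) (by rw [le_div_iff₀ hq0]; linarith)
    have hstep : 4 * lam ^ ((2:ℝ)/q) ≤ (2/q) * lam := by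
      have hsplit : lam ^ ((2:ℝ)/q) = lam * lam ^ ((2:ℝ)/q - 1) := by
        have hne : 1 + ((2:ℝ)/q - 1) ≠ 0 := by
          rw [show 1 + ((2:ℝ)/q - 1) = 2/q by ring]
          positivity
        rw [← Real.rpow_one_add' hlampos.le hne]
        ring_nf
      have hlam1 : lam ≤ 1 := hlamle.trans (by norm_num)
      have hmono : lam ^ ((2:ℝ)/q - 1) ≤ lam ^ ((1:ℝ)/3) := by
        apply Real.rpow_le_rpow_of_exponent_ge' hlampos.le hlam1 (by norm_num)
        have : (4:ℝ)/3 ≤ 2/q := by rw [le_div_iff₀ hq0]; linarith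
        linarith
      have hcube : lam ^ ((1:ℝ)/3) ≤ 1/3 := by
        calc lam ^ ((1:ℝ)/3) ≤ ((1:ℝ)/27) ^ ((1:ℝ)/3) :=
              Real.rpow_le_rpow hlampos.le (by linarith) (by norm_num)
          _ = 1/3 := by
              rw [show ((1:ℝ)/27) = ((1:ℝ)/3) ^ (3:ℕ) by norm_num,
                ← Real.rpow_natCast ((1:ℝ)/3) 3, ← Real.rpow_mul (by norm_num)]
              norm_num
      have h2q : (4:ℝ)/3 ≤ 2/q := by rw [le_div_iff₀ hq0]; linarith
      calc 4 * lam ^ ((2:ℝ)/q) = 4 * (lam * lam ^ ((2:ℝ)/q - 1)) := by rw [hsplit]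
        _ ≤ 4 * (lam * (1/3)) := by
            apply mul_le_mul_of_nonneg_left _ (by norm_num)
            exact mul_le_mul_of_nonneg_left (hmono.trans hcube) hlampos.le
        _ = (4/3) * lam := by ring
        _ ≤ (2/q) * lam := mul_le_mul_of_nonneg_right h2q hlampos.le
    have hfactor : x ^ q + Yq = x ^ q * (1 + lam) := by
      rw [hlamdef]
      field_simp
    have hYq2 : x ^ 2 * lam ^ ((2:ℝ)/q) = Yq ^ ((2:ℝ)/q) := by
      rw [← hxq2, ← Real.mul_rpow hxq.le hlampos.le]
      congr 1
      rw [hlamdef]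
      field_simp
    calc x ^ 2 + 3 * y ^ 2 ≤ x ^ 2 + 4 * Yq ^ ((2:ℝ)/q) := by linarith
      _ = x ^ 2 * (1 + 4 * lam ^ ((2:ℝ)/q)) := by
          rw [mul_add, mul_one, mul_comm (x^2) (4 * lam ^ ((2:ℝ)/q)), mul_assoc,
            mul_comm (lam ^ ((2:ℝ)/q)) (x^2), hYq2]
      _ ≤ x ^ 2 * (1 + (2/q) * lam) := by
          apply mul_le_mul_of_nonneg_left _ (sq_nonneg x)
          linarith
      _ ≤ x ^ 2 * (1 + lam) ^ ((2:ℝ)/q) := mul_le_mul_of_nonneg_left hbern (sq_nonneg x)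
      _ = (x ^ q + Yq) ^ ((2:ℝ)/q) := by
          rw [hfactor, Real.mul_rpow hxq.le (by linarith : (0:ℝ) ≤ 1 + lam), hxq2]


set_option maxHeartbeats 1000000 in
/-- Endgame of the upper-bound proof: for `f = x·δ₀ + g` close to a delta function,
`‖f*f‖₂ ≤ x² + 3y² ≤ ‖f‖_q²` where `y = ‖g‖_{4/3}`. -/
theorem stmt_19 :
    ∃ δ₀ > (0:ℝ), ∀ (n : ℕ) (x : ℝ) (g : ℤ → ℝ) (f : ℤ → ℝ),
      2 ≤ n → 0 < x → g 0 = 0 → (∀ a, 0 ≤ g a) →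
      (f = fun a => (if a = 0 then x else 0) + g a) →
      ∀ hf : (Function.support f).Finite, hf.toFinset.card = n →
      ∀ y : ℝ, y = (∑' a : ℤ, g a ^ ((4:ℝ)/3)) ^ ((3:ℝ)/4) →
      x ^ ((4:ℝ)/3) + y ^ ((4:ℝ)/3) = 1 → y / x ≤ 0.01 →
      ((∑' s : ℤ, (∑' a : ℤ, f a * f (s - a)) ^ 2) ^ ((1:ℝ)/2) ≤ x ^ 2 + 3 * y ^ 2) ∧
      ∀ q δ : ℝ, 4 / 3 ≤ q → q ≤ 3 / 2 → 0 < δ → δ ≤ δ₀ →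
        (n : ℝ) ^ ((3:ℝ)/4 - 1/q) ≤ (1 + δ) ^ ((1:ℝ)/4) →
        x ^ 2 + 3 * y ^ 2 ≤ ((∑' a : ℤ, f a ^ q) ^ (1/q)) ^ 2 ∧
        (∑' s : ℤ, (∑' a : ℤ, f a * f (s - a)) ^ 2) ^ ((1:ℝ)/2)
          ≤ ((∑' a : ℤ, f a ^ q) ^ (1/q)) ^ 2 := by
  refine ⟨1/2, by norm_num, ?_⟩
  intro n x g f hn hx hg00 hgnn hfdef hf hcard y hy hnorm hyx
  classical
  set S : Finset ℤ := hf.toFinset with hSdef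
  have hfS : ∀ a, a ∉ S → f a = 0 := by
    intro a ha
    by_contra h
    exact ha (hf.mem_toFinset.mpr h)
  have hite : ∀ a : ℤ, 0 ≤ (if a = 0 then x else (0:ℝ)) := fun a => by
    split
    exacts [hx.le, le_rfl]
  have hfnn : ∀ a, 0 ≤ f a := by
    intro a; rw [hfdef]
    exact add_nonneg (hite a) (hgnn a)
  have h0S : (0:ℤ) ∈ S := by
    refine hf.mem_toFinset.mpr ?_
    simp only [Function.mem_support, hfdef, if_pos rfl, hg00, add_zero]
    exact hx.ne'
  have hgS : ∀ a, a ∉ S → g a = 0 := by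
    intro a ha
    have hne : a ≠ 0 := fun h => ha (h ▸ h0S)
    have := hfS a ha
    rw [hfdef] at this
    simpa [hne] using this
  set T : Finset ℤ := S + S with hTdef
  have hT : ∀ a ∈ S, ∀ b ∈ S, a + b ∈ T := fun a ha b hb => Finset.add_mem_add ha hb
  have hSsubT : S ⊆ T := by
    intro a ha
    have : (0:ℤ) + a ∈ T := hT 0 h0S a ha
    simpa using this
  -- basic sums
  set A : ℝ := ∑ a ∈ S, g a ^ ((4:ℝ)/3) with hAdef
  have hA0 : 0 ≤ A := Finset.sum_nonneg fun i _ => Real.rpow_nonneg (hgnn i) _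
  have htsumA : (∑' a : ℤ, g a ^ ((4:ℝ)/3)) = A :=
    tsum_eq_sum (fun b hb => by rw [hgS b hb, Real.zero_rpow (by norm_num)])
  have hyA : y = A ^ ((3:ℝ)/4) := by rw [hy, htsumA]
  have hy0 : 0 ≤ y := hyA ▸ Real.rpow_nonneg hA0 _
  have hyA43 : y ^ ((4:ℝ)/3) = A := by
    rw [hyA, ← Real.rpow_mul hA0]; norm_num
  -- convolution as finite sums
  set c : ℤ → ℝ := fun s => ∑ a ∈ S, f a * f (s - a) with hcdef
  have htsum_in : ∀ s : ℤ, (∑' a : ℤ, f a * f (s - a)) = c s := fun s =>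
    tsum_eq_sum (fun b hb => by rw [hfS b hb, zero_mul])
  have hcT : ∀ s, s ∉ T → c s = 0 := by
    intro s hs
    apply Finset.sum_eq_zero
    intro a ha
    rcases eq_or_ne (f (s - a)) 0 with h | h
    · rw [h, mul_zero]
    · exfalso
      have hsa : s - a ∈ S := hf.mem_toFinset.mpr h
      have : a + (s - a) ∈ T := hT a ha _ hsa
      rw [add_sub_cancel] at this
      exact hs this
  have hLHS : (∑' s : ℤ, (∑' a : ℤ, f a * f (s - a)) ^ 2) = ∑ s ∈ T, c s ^ 2 := by
    have : ∀ s : ℤ, (∑' a : ℤ, f a * f (s - a)) ^ 2 = c s ^ 2 := fun s => by rw [htsum_in]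
    rw [tsum_congr this]
    exact tsum_eq_sum (fun b hb => by rw [hcT b hb]; norm_num)
  -- decomposition c = u + h
  set u : ℤ → ℝ := fun s => (if s = 0 then x ^ 2 else 0) + 2 * x * g s with hudef
  set h : ℤ → ℝ := fun s => ∑ a ∈ S, g a * g (s - a) with hhdef
  have hh0 : ∀ s, 0 ≤ h s := fun s =>
    Finset.sum_nonneg fun a _ => mul_nonneg (hgnn a) (hgnn _)
  have hu0 : ∀ s, 0 ≤ u s := by
    intro s
    have h1 : 0 ≤ (if s = 0 then x ^ 2 else (0:ℝ)) := by split; exacts [sq_nonneg x, le_rfl]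
    have h2 : 0 ≤ 2 * x * g s := mul_nonneg (by positivity) (hgnn s)
    exact add_nonneg h1 h2
  have hdecomp : ∀ s, c s = u s + h s := by
    intro s
    have hterm : ∀ a : ℤ, f a * f (s - a) =
        ((if a = 0 then x else 0) * (if s - a = 0 then x else 0)
          + (if a = 0 then x else 0) * g (s - a))
        + (g a * (if s - a = 0 then x else 0) + g a * g (s - a)) := by
      intro a; rw [hfdef]; ring
    have hc1 : c s = ∑ a ∈ S, (((if a = 0 then x else 0) * (if s - a = 0 then x else 0)
          + (if a = 0 then x else 0) * g (s - a))
        + (g a * (if s - a = 0 then x else 0) + g a * g (s - a))) :=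
      Finset.sum_congr rfl fun a _ => hterm a
    rw [hc1, Finset.sum_add_distrib, Finset.sum_add_distrib, Finset.sum_add_distrib]
    have e1 : ∑ a ∈ S, (if a = 0 then x else 0) * (if s - a = 0 then x else 0)
        = (if s = 0 then x ^ 2 else 0) := by
      rw [Finset.sum_eq_single_of_mem 0 h0S (fun b _ hb => by rw [if_neg hb, zero_mul])]
      by_cases hs : s = 0
      · subst hs; simp [sq]
      · simp [hs]
    have e2 : ∑ a ∈ S, (if a = 0 then x else 0) * g (s - a) = x * g s := by
      rw [Finset.sum_eq_single_of_mem 0 h0S (fun b _ hb => by rw [if_neg hb, zero_mul])]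
      simp
    have e3 : ∑ a ∈ S, g a * (if s - a = 0 then x else 0) = x * g s := by
      by_cases hs : s ∈ S
      · rw [Finset.sum_eq_single_of_mem s hs (fun b _ hb => by
          rw [if_neg (by omega : ¬ s - b = 0), mul_zero])]
        simp [mul_comm]
      · rw [Finset.sum_eq_zero, hgS s hs, mul_zero]
        intro a ha
        have : a ≠ s := fun hh => hs (hh ▸ ha)
        rw [if_neg (by omega : ¬ s - a = 0), mul_zero]
    rw [e1, e2, e3, hudef, hhdef]
    ring
  -- claim 1
  have part1 : (∑' s : ℤ, (∑' a : ℤ, f a * f (s - a)) ^ 2) ^ ((1:ℝ)/2) ≤ x ^ 2 + 3 * y ^ 2 := by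
    rw [hLHS]
    set G2 : ℝ := ∑ a ∈ S, g a ^ 2 with hG2def
    have hG2T : ∑ s ∈ T, g s ^ 2 = G2 :=
      (Finset.sum_subset hSsubT (fun b _ hb => by rw [hgS b hb]; norm_num)).symm
    have h0T : (0:ℤ) ∈ T := hSsubT h0S
    have hU : ∑ s ∈ T, u s ^ 2 = x ^ 4 + 4 * x ^ 2 * G2 := by
      have hpt : ∀ s ∈ T, u s ^ 2 = (if s = 0 then x ^ 4 else 0) + 4 * x ^ 2 * g s ^ 2 := by
        intro s _
        by_cases hs : s = 0
        · subst hs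
          simp [hudef, hg00]
          ring
        · simp only [hudef, if_neg hs]
          ring
      rw [Finset.sum_congr rfl hpt, Finset.sum_add_distrib,
        Finset.sum_eq_single_of_mem 0 h0T (fun b _ hb => by rw [if_neg hb]), if_pos rfl,
        ← Finset.mul_sum, hG2T]
    have hsq32 : y ^ 2 = A ^ ((3:ℝ)/2) := by
      rw [hyA, ← Real.rpow_natCast (A ^ ((3:ℝ)/4)) 2, ← Real.rpow_mul hA0]
      norm_num
    have hG2y : G2 ≤ y ^ 2 := by
      have hpt : ∀ a ∈ S, g a ^ 2 = (g a ^ ((4:ℝ)/3)) ^ ((3:ℝ)/2) := by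
        intro a _
        rw [← Real.rpow_natCast (g a) 2, ← Real.rpow_mul (hgnn a)]
        norm_num
      rw [hG2def, Finset.sum_congr rfl hpt, hsq32]
      exact sum_rpow_le S _ (fun a _ => Real.rpow_nonneg (hgnn a) _) (by norm_num)
    have hconv : ∑ s ∈ T, h s ^ 2 = ∑ p ∈ S ×ˢ S, g p.1 * g p.2 * h (p.1 + p.2) := by
      rw [Finset.sum_product]
      calc ∑ s ∈ T, h s ^ 2 = ∑ s ∈ T, ∑ a ∈ S, g a * g (s - a) * h s := by
            apply Finset.sum_congr rfl; intro s _
            rw [sq]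
            conv_lhs => rw [hhdef]
            rw [Finset.sum_mul]
        _ = ∑ a ∈ S, ∑ s ∈ T, g a * g (s - a) * h s := Finset.sum_comm
        _ = ∑ a ∈ S, ∑ b ∈ S, g a * g b * h (a + b) := by
            apply Finset.sum_congr rfl; intro a ha
            have hsub : S.image (a + ·) ⊆ T := by
              intro cc hcc
              obtain ⟨b, hb, rfl⟩ := Finset.mem_image.mp hcc
              exact hT a ha b hb
            rw [← Finset.sum_subset hsub (fun cc hccT hcc => by
              have hnm : cc - a ∉ S := fun hmem => hcc (Finset.mem_image.mpr ⟨cc - a, hmem, by ring⟩)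
              rw [hgS _ hnm, mul_zero, zero_mul])]
            rw [Finset.sum_image (fun p _ r _ hpr => by omega)]
            apply Finset.sum_congr rfl; intro b _
            rw [add_sub_cancel_left]
    have hHH0 : (0:ℝ) ≤ ∑ s ∈ T, h s ^ 2 := Finset.sum_nonneg fun s _ => sq_nonneg _
    have hQy : (∑ s ∈ T, h s ^ 2) ^ ((1:ℝ)/2) ≤ y ^ 2 := by
      have htri := trilinear S T g h hgnn hh0 hT
      rw [← hconv, ← hAdef, ← hsq32] at htri
      set HH : ℝ := ∑ s ∈ T, h s ^ 2 with hHHdef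
      rcases eq_or_lt_of_le hHH0 with h0 | h0
      · rw [← h0, Real.zero_rpow (by norm_num)]
        positivity
      · have hfact : (HH ^ ((1:ℝ)/2)) ^ 2 = HH := rpow_half_sq hHH0
        have hQpos : 0 < HH ^ ((1:ℝ)/2) := Real.rpow_pos_of_pos h0 _
        nlinarith [htri, hfact, hQpos]
    -- assemble
    have hb3 : (0:ℝ) ≤ x ^ 2 + 3 * y ^ 2 := by positivity
    apply rpow_half_le hb3
    have hexp : ∑ s ∈ T, c s ^ 2
        = ∑ s ∈ T, u s ^ 2 + 2 * (∑ s ∈ T, u s * h s) + ∑ s ∈ T, h s ^ 2 := by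
      have : ∀ s ∈ T, c s ^ 2 = u s ^ 2 + 2 * (u s * h s) + h s ^ 2 := by
        intro s _; rw [hdecomp s]; ring
      rw [Finset.sum_congr rfl this, Finset.sum_add_distrib, Finset.sum_add_distrib,
        ← Finset.mul_sum]
    have hcs := cs_sqrt T u h
    set P : ℝ := (∑ s ∈ T, u s ^ 2) ^ ((1:ℝ)/2) with hPdef
    set Q : ℝ := (∑ s ∈ T, h s ^ 2) ^ ((1:ℝ)/2) with hQdef
    have hU0 : (0:ℝ) ≤ ∑ s ∈ T, u s ^ 2 := Finset.sum_nonneg fun s _ => sq_nonneg _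
    have hP2 : P ^ 2 = ∑ s ∈ T, u s ^ 2 := rpow_half_sq hU0
    have hQ2 : Q ^ 2 = ∑ s ∈ T, h s ^ 2 := rpow_half_sq hHH0
    have hP0 : 0 ≤ P := Real.rpow_nonneg hU0 _
    have hQ0 : 0 ≤ Q := Real.rpow_nonneg hHH0 _
    have hPle : P ≤ x ^ 2 + 2 * y ^ 2 := by
      apply rpow_half_le (by positivity)
      rw [hU]
      nlinarith [hG2y, sq_nonneg x, sq_nonneg y, hx.le]
    have hsum : P + Q ≤ x ^ 2 + 3 * y ^ 2 := by linarith [hQy]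
    calc ∑ s ∈ T, c s ^ 2 ≤ P ^ 2 + 2 * (P * Q) + Q ^ 2 := by
          rw [hexp, hP2, hQ2]
          nlinarith [hcs]
      _ = (P + Q) ^ 2 := by ring
      _ ≤ (x ^ 2 + 3 * y ^ 2) ^ 2 := by nlinarith [hsum, hP0, hQ0, hb3]
  refine ⟨part1, ?_⟩
  intro q δ hq1 hq2 hδ0 hδhalf hnd
  have hq0 : (0:ℝ) < q := by linarith
  clear_value S T A c u h
  clear hdecomp hu0 hh0 hcT htsum_in hLHS hT hSsubT
  have part2 : x ^ 2 + 3 * y ^ 2 ≤ ((∑' a : ℤ, f a ^ q) ^ (1/q)) ^ 2 := by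
    have hqne : q ≠ 0 := hq0.ne'
    obtain ⟨Yq, hYqdef⟩ : ∃ Y : ℝ, Y = ∑ a ∈ S, g a ^ q := ⟨_, rfl⟩
    have hYq0 : 0 ≤ Yq := hYqdef ▸ Finset.sum_nonneg fun a _ => Real.rpow_nonneg (hgnn a) _
    have hxq : 0 < x ^ q := Real.rpow_pos_of_pos hx q
    -- the tsum is x^q + Yq
    have hFq : (∑' a : ℤ, f a ^ q) = x ^ q + Yq := by
      have htsq : (∑' a : ℤ, f a ^ q) = ∑ a ∈ S, f a ^ q :=
        tsum_eq_sum (fun b hb => by rw [hfS b hb, Real.zero_rpow hqne])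
      rw [htsq, hYqdef]
      have hpt : ∀ a ∈ S, f a ^ q = (if a = 0 then x ^ q else 0) + g a ^ q := by
        intro a _
        by_cases ha : a = 0
        · subst ha
          rw [hfdef]
          simp [hg00, Real.zero_rpow hqne]
        · rw [hfdef]
          simp [ha]
      rw [Finset.sum_congr rfl hpt, Finset.sum_add_distrib,
        Finset.sum_eq_single_of_mem 0 h0S (fun b _ hb => by rw [if_neg hb]), if_pos rfl]
    rw [hFq]
    have hFq0 : (0:ℝ) ≤ x ^ q + Yq := by positivity
    have hpow2 : ((x ^ q + Yq) ^ (1/q)) ^ 2 = (x ^ q + Yq) ^ ((2:ℝ)/q) := by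
      rw [← Real.rpow_natCast ((x ^ q + Yq) ^ (1/q)) 2, ← Real.rpow_mul hFq0]
      congr 1
      push_cast
      ring
    rw [hpow2]
    -- ℓ^q ≤ ℓ^{4/3} : Yq ≤ y^q
    have hYqy : Yq ≤ y ^ q := by
      have hpt : ∀ a ∈ S, g a ^ q = (g a ^ ((4:ℝ)/3)) ^ (3*q/4) := by
        intro a _
        rw [← Real.rpow_mul (hgnn a)]
        congr 1
        field_simp
      have h1 : Yq ≤ A ^ (3*q/4) := by
        rw [hYqdef, hAdef, Finset.sum_congr rfl hpt]
        exact sum_rpow_le S (fun a => g a ^ ((4:ℝ)/3)) (fun a _ => Real.rpow_nonneg (hgnn a) _)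
          (show (1:ℝ) ≤ 3*q/4 by linarith)
      have h2 : A ^ (3*q/4) = y ^ q := by
        rw [hyA, ← Real.rpow_mul hA0]
        congr 1
        ring
      linarith [h1, h2 ▸ h1]
    -- Hölder with support size
    have hAn : A ≤ Yq ^ ((4:ℝ)/(3*q)) * (n:ℝ) ^ (1 - (4:ℝ)/(3*q)) := by
      rw [hYqdef, hAdef]
      have hp1 : (1:ℝ) ≤ 3*q/4 := by linarith
      have hw := Real.inner_le_weight_mul_Lp_of_nonneg S hp1 (fun _ => (1:ℝ))
        (fun a => g a ^ ((4:ℝ)/3)) (fun _ => zero_le_one)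
        (fun a => Real.rpow_nonneg (hgnn a) _)
      simp only [one_mul] at hw
      have hcardn : ∑ _a ∈ S, (1:ℝ) = (n:ℝ) := by
        rw [Finset.sum_const, hcard]
        simp
      have hptq : ∀ a ∈ S, (g a ^ ((4:ℝ)/3)) ^ (3*q/4) = g a ^ q := by
        intro a _
        rw [← Real.rpow_mul (hgnn a)]
        congr 1
        field_simp
      rw [hcardn, Finset.sum_congr rfl hptq] at hw
      have hinv : (3*q/4 : ℝ)⁻¹ = (4:ℝ)/(3*q) := by field_simp
      rw [hinv] at hw
      calc ∑ a ∈ S, g a ^ ((4:ℝ)/3)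
          ≤ (n:ℝ) ^ (1 - (4:ℝ)/(3*q)) * (∑ a ∈ S, g a ^ q) ^ ((4:ℝ)/(3*q)) := hw
        _ = (∑ a ∈ S, g a ^ q) ^ ((4:ℝ)/(3*q)) * (n:ℝ) ^ (1 - (4:ℝ)/(3*q)) := mul_comm _ _
    have hn0 : (0:ℝ) ≤ (n:ℝ) := Nat.cast_nonneg n
    have hδ1 : (0:ℝ) ≤ 1 + δ := by linarith
    have hnd' : (n:ℝ) ^ (1 - (4:ℝ)/(3*q)) ≤ (1 + δ) ^ ((1:ℝ)/3) := by
      have h43 : ((3:ℝ)/4 - 1/q) * ((4:ℝ)/3) = 1 - 4/(3*q) := by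
        field_simp
      have := Real.rpow_le_rpow (Real.rpow_nonneg hn0 _) hnd (by norm_num : (0:ℝ) ≤ 4/3)
      rw [← Real.rpow_mul hn0, ← Real.rpow_mul hδ1, h43] at this
      have h13 : (1:ℝ)/4 * (4/3) = 1/3 := by norm_num
      rwa [h13] at this
    have hYqq0 : 0 ≤ Yq ^ ((4:ℝ)/(3*q)) := Real.rpow_nonneg hYq0 _
    have hy43 : y ^ ((4:ℝ)/3) ≤ Yq ^ ((4:ℝ)/(3*q)) * (1 + δ) ^ ((1:ℝ)/3) := by
      rw [hyA43]
      calc A ≤ Yq ^ ((4:ℝ)/(3*q)) * (n:ℝ) ^ (1 - (4:ℝ)/(3*q)) := hAn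
        _ ≤ Yq ^ ((4:ℝ)/(3*q)) * (1 + δ) ^ ((1:ℝ)/3) :=
          mul_le_mul_of_nonneg_left hnd' hYqq0
    exact final_alg hx hy0 hq1 hq2 hδ0 hδhalf hYq0 hYqy hyx hy43
  exact ⟨part2, part1.trans part2⟩
end
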